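/- arXiv:2410.15474 — 4 statements merged into one kernel-verified Lean document; each statement's English description precedes it below -/
import Mathlib

section
/- If a pair of forward and backward policies on a finite DAG satisfies the trajectory balance constraint (the forward trajectory probability of every complete trajectory equals R(x)/Z times the backward trajectory probability), then the marginal distribution over terminal states induced by sampling trajectories from the forward policy equals R(x)/Z. -/
open scoped BigOperators Classical

noncomputable section

/-- Product of `f` over consecutive pairs of a list. -/
def pairProd {S : Type*} (f : S → S → ℝ) : List S → ℝ
  | [] => 1
  | [_] => 1
  | a :: b :: l => f a b * pairProd f (b :: l)

/-- A forward policy: nonnegative, supported on edges, and a probability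
distribution over children at every non-terminal state. -/
def IsForwardPolicy {S : Type*} [Fintype S] (E : S → S → Prop) (term : S → Prop)
    (PF : S → S → ℝ) : Prop :=
  (∀ s s', 0 ≤ PF s s') ∧ (∀ s s', PF s s' ≠ 0 → E s s') ∧
    (∀ s, ¬ term s → ∑ s' : S, PF s s' = 1)

/-- A backward policy: `PB s' s` is the probability of the parent `s` given `s'`;
nonnegative, supported on edges, and a probability distribution over parents at
every non-initial state. -/
def IsBackwardPolicy {S : Type*} [Fintype S] (E : S → S → Prop) (s0 : S)
    (PB : S → S → ℝ) : Prop :=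
  (∀ s' s, 0 ≤ PB s' s) ∧ (∀ s' s, PB s' s ≠ 0 → E s s') ∧
    (∀ s', s' ≠ s0 → ∑ s : S, PB s' s = 1)

theorem pairProd_append {S : Type*} (f : S → S → ℝ) (l : List S) (a b : S)
    (h : l.getLast? = some a) : pairProd f (l ++ [b]) = pairProd f l * f a b := by
  induction l with
  | nil => simp at h
  | cons c t ih =>
    cases t with
    | nil =>
      simp only [List.getLast?_singleton, Option.some.injEq] at h
      subst h
      simp [pairProd, mul_comm]
    | cons d t' =>
      have h' : (d :: t').getLast? = some a := by
        rw [← h]; rfl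
      have key := ih h'
      show f c d * pairProd f ((d :: t') ++ [b]) = (f c d * pairProd f (d :: t')) * f a b
      rw [key, mul_assoc]

/-- Paths from `s0` to `s`, computed with fuel `n`. -/
def pathsAux {S : Type*} [Fintype S] [DecidableEq S] (E : S → S → Prop) (s0 : S) :
    ℕ → S → Finset (List S)
  | 0, s => if s = s0 then {[s0]} else ∅
  | n+1, s => if s = s0 then {[s0]} else
      Finset.univ.biUnion fun p =>
        if E p s then (pathsAux E s0 n p).image (· ++ [s]) else ∅

theorem mem_pathsAux_props {S : Type*} [Fintype S] [DecidableEq S]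
    (E : S → S → Prop) (s0 : S) :
    ∀ n (s : S) (l : List S), l ∈ pathsAux E s0 n s →
      l.head? = some s0 ∧ l.Chain' E ∧ l.getLast? = some s := by
  intro n
  induction n with
  | zero =>
    intro s l hl
    unfold pathsAux at hl
    split_ifs at hl with hs
    · simp only [Finset.mem_singleton] at hl
      subst hl; subst hs; simp [List.Chain']
    · simp at hl
  | succ n ih =>
    intro s l hl
    unfold pathsAux at hl
    split_ifs at hl with hs
    · simp only [Finset.mem_singleton] at hl
      subst hl; subst hs; simp [List.Chain']
    · simp only [Finset.mem_biUnion, Finset.mem_univ, true_and] at hl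
      obtain ⟨p, hp⟩ := hl
      split_ifs at hp with hE
      · simp only [Finset.mem_image] at hp
        obtain ⟨l', hl', rfl⟩ := hp
        obtain ⟨h1, h2, h3⟩ := ih p l' hl'
        have hne : l' ≠ [] := by rintro rfl; simp at h1
        refine ⟨?_, ?_, ?_⟩
        · rw [List.head?_append_of_ne_nil _ hne, h1]
        · rw [List.Chain', List.isChain_append]
          exact ⟨h2, List.isChain_singleton _, by
            intro x hx y hy
            rw [h3] at hx
            simp only [Option.mem_def, Option.some.injEq] at hx hy
            simp only [List.head?_cons, Option.some.injEq] at hy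
            subst hx; subst hy; exact hE⟩
        · exact List.getLast?_concat
      · simp at hp

theorem mem_pathsAux_of {S : Type*} [Fintype S] [DecidableEq S]
    (E : S → S → Prop) (s0 : S)
    (hinit : ∀ s, ¬ E s s0)
    (rank : S → ℕ) (hrank : ∀ s s', E s s' → rank s < rank s') :
    ∀ n (s : S) (l : List S), rank s ≤ n →
      l.head? = some s0 → l.Chain' E → l.getLast? = some s →
      l ∈ pathsAux E s0 n s := by
  intro n
  induction n with
  | zero =>
    intro s l hn h1 h2 h3
    obtain ⟨l', rfl⟩ := List.getLast?_eq_some_iff.1 h3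
    cases l' with
    | nil =>
      simp only [List.nil_append, List.head?_cons, Option.some.injEq] at h1
      subst h1
      unfold pathsAux
      rw [if_pos rfl]
      simp
    | cons c t =>
      exfalso
      rw [List.Chain', List.isChain_append] at h2
      obtain ⟨-, -, h4⟩ := h2
      obtain ⟨p, hp⟩ := Option.ne_none_iff_exists'.1 (by simp : (c :: t).getLast? ≠ none)
      have hE : E p s := h4 p hp s rfl
      have := hrank p s hE
      omega
  | succ n ih =>
    intro s l hn h1 h2 h3
    obtain ⟨l', rfl⟩ := List.getLast?_eq_some_iff.1 h3
    cases l' with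
    | nil =>
      simp only [List.nil_append, List.head?_cons, Option.some.injEq] at h1
      subst h1
      unfold pathsAux
      rw [if_pos rfl]
      simp
    | cons c t =>
      rw [List.Chain', List.isChain_append] at h2
      obtain ⟨hc1, -, h4⟩ := h2
      obtain ⟨p, hp⟩ := Option.ne_none_iff_exists'.1 (by simp : (c :: t).getLast? ≠ none)
      have hE : E p s := h4 p hp s rfl
      have hs0 : s ≠ s0 := fun h => hinit p (h ▸ hE)
      have hhead : (c :: t).head? = some s0 := by
        rwa [List.head?_append_of_ne_nil _ (by simp)] at h1
      have hrk : rank p ≤ n := by have := hrank p s hE; omega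
      have hmem := ih p (c :: t) hrk hhead hc1 hp
      unfold pathsAux
      rw [if_neg hs0]
      simp only [Finset.mem_biUnion, Finset.mem_univ, true_and]
      exact ⟨p, by rw [if_pos hE]; exact Finset.mem_image_of_mem _ hmem⟩

theorem sum_pathsAux {S : Type*} [Fintype S] [DecidableEq S]
    (E : S → S → Prop) (s0 : S)
    (hreach : ∀ s, Relation.ReflTransGen E s0 s)
    (rank : S → ℕ) (hrank : ∀ s s', E s s' → rank s < rank s')
    (PB : S → S → ℝ) (hPB : IsBackwardPolicy E s0 PB) :
    ∀ n (s : S), rank s ≤ n →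
      ∑ l ∈ pathsAux E s0 n s, pairProd (fun a b => PB b a) l = 1 := by
  intro n
  induction n with
  | zero =>
    intro s hn
    by_cases hs : s = s0
    · subst hs
      unfold pathsAux
      rw [if_pos rfl]
      simp [pairProd]
    · exfalso
      rcases (hreach s).cases_tail with h | ⟨p, _, hE⟩
      · exact hs h
      · have := hrank p s hE; omega
  | succ n ih =>
    intro s hn
    by_cases hs : s = s0
    · subst hs
      unfold pathsAux
      rw [if_pos rfl]
      simp [pairProd]
    · unfold pathsAux
      rw [if_neg hs]
      rw [Finset.sum_biUnion ?disj]
      case disj =>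
        intro p _ q _ hpq
        simp only [Function.onFun]
        rw [Finset.disjoint_left]
        intro l hlp hlq
        split_ifs at hlp hlq with h h'
        · simp only [Finset.mem_image] at hlp hlq
          obtain ⟨l₁, hl₁, he₁⟩ := hlp
          obtain ⟨l₂, hl₂, he₂⟩ := hlq
          have : l₁ = l₂ := List.append_cancel_right (he₁.trans he₂.symm)
          subst this
          have hp' := (mem_pathsAux_props E s0 n p l₁ hl₁).2.2
          have hq' := (mem_pathsAux_props E s0 n q l₁ hl₂).2.2
          rw [hp'] at hq'
          exact hpq (Option.some.inj hq')
        all_goals simp_all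
      have key : ∀ p : S,
          (∑ l ∈ (if E p s then (pathsAux E s0 n p).image (· ++ [s]) else ∅),
            pairProd (fun a b => PB b a) l) = PB s p := by
        intro p
        split_ifs with hE
        · rw [Finset.sum_image (by intro a _ b _ h; exact List.append_cancel_right h)]
          have : ∀ l' ∈ pathsAux E s0 n p,
              pairProd (fun a b => PB b a) (l' ++ [s]) =
                pairProd (fun a b => PB b a) l' * PB s p := by
            intro l' hl'
            exact pairProd_append _ _ _ _ (mem_pathsAux_props E s0 n p l' hl').2.2
          rw [Finset.sum_congr rfl this, ← Finset.sum_mul,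
            ih p (by have := hrank p s hE; omega), one_mul]
        · simp only [Finset.sum_empty]
          by_contra h
          exact hE (hPB.2.1 s p (Ne.symm h))
      rw [Finset.sum_congr rfl fun p _ => key p]
      exact hPB.2.2 s hs

/-- If trajectory balance holds for every complete trajectory, then the marginal
distribution over terminal states induced by the forward policy is `R x / Z`. -/
theorem forward_marginal_of_trajectory_balance
    {S : Type*} [Fintype S] [DecidableEq S]
    (E : S → S → Prop) (s0 : S) (term : S → Prop)
    (hterm : ∀ s, term s ↔ ∀ s', ¬ E s s')
    (hinit : ∀ s, ¬ E s s0)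
    (hreach : ∀ s, Relation.ReflTransGen E s0 s)
    (rank : S → ℕ) (hrank : ∀ s s', E s s' → rank s < rank s')
    (T : Finset (List S))
    (hT : ∀ l, l ∈ T ↔
      (l.head? = some s0 ∧ l.Chain' E ∧ ∃ x, l.getLast? = some x ∧ term x))
    (R : S → ℝ) (hR : ∀ x, term x → 0 ≤ R x)
    (Z : ℝ) (hZ : Z = ∑ x ∈ Finset.univ.filter term, R x) (hZpos : 0 < Z)
    (PF PB : S → S → ℝ)
    (hPF : IsForwardPolicy E term PF)
    (hPB : IsBackwardPolicy E s0 PB)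
    (hTB : ∀ l ∈ T, ∀ x, l.getLast? = some x →
      pairProd PF l = R x / Z * pairProd (fun a b => PB b a) l) :
    ∀ x, term x →
      ∑ l ∈ T.filter (fun l => l.getLast? = some x), pairProd PF l = R x / Z := by
  intro x hx
  have hset : T.filter (fun l => l.getLast? = some x) = pathsAux E s0 (rank x) x := by
    ext l
    simp only [Finset.mem_filter, hT]
    constructor
    · rintro ⟨⟨h1, h2, -⟩, h3⟩
      exact mem_pathsAux_of E s0 hinit rank hrank (rank x) x l le_rfl h1 h2 h3
    · intro hl
      obtain ⟨h1, h2, h3⟩ := mem_pathsAux_props E s0 (rank x) x l hl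
      exact ⟨⟨h1, h2, x, h3, hx⟩, h3⟩
  have hrw : ∀ l ∈ T.filter (fun l => l.getLast? = some x),
      pairProd PF l = R x / Z * pairProd (fun a b => PB b a) l := by
    intro l hl
    rw [Finset.mem_filter] at hl
    exact hTB l hl.1 x hl.2
  rw [Finset.sum_congr rfl hrw, ← Finset.mul_sum, hset,
    sum_pathsAux E s0 hreach rank hrank PB hPB (rank x) x le_rfl, mul_one]

end
end

section
/- Any global minimizer (P_F, P_B) of the joint objective KL(P^{P_F} ‖ P^{P_B}) over forward and backward policies achieves value 0 and satisfies the trajectory balance constraint, hence P_F induces the marginal distribution R(x)/Z over terminal states. -/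
open scoped BigOperators Classical ENNReal

noncomputable section

def bTraj {S : Type*} (R : S → ℝ) (Z : ℝ) (PB : S → S → ℝ) (l : List S) : ℝ :=
  ((l.getLast?.map R).getD 0 / Z) * pairProd (fun a b => PB b a) l

/-- Extended-real KL divergence on a finite set, with the conventions
`0 log (0/q) = 0` and `KL = ⊤` when absolute continuity fails. -/
def klDivFin {α : Type*} (A : Finset α) (p q : α → ℝ) : ℝ≥0∞ :=
  if ∀ a ∈ A, q a = 0 → p a = 0 then
    ENNReal.ofReal (∑ a ∈ A, p a * Real.log (p a / q a))
  else ⊤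

namespace Aux

variable {S : Type*}

lemma pairProd_cons (f : S → S → ℝ) (a b : S) (l : List S) :
    pairProd f (a :: b :: l) = f a b * pairProd f (b :: l) := rfl

lemma pairProd_nonneg (f : S → S → ℝ) (hf : ∀ a b, 0 ≤ f a b) :
    ∀ l : List S, 0 ≤ pairProd f l
  | [] => zero_le_one
  | [_] => zero_le_one
  | a :: b :: l => mul_nonneg (hf a b) (pairProd_nonneg f hf (b :: l))

lemma pairProd_eq_one (f : S → S → ℝ) :
    ∀ l : List S, l.Chain' (fun a b => f a b = 1) → pairProd f l = 1
  | [], _ => rfl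
  | [_], _ => rfl
  | a :: b :: l, h => by
    unfold List.Chain' at h; rw [List.isChain_cons_cons] at h
    rw [pairProd_cons, h.1, one_mul]
    exact pairProd_eq_one f (b :: l) h.2

lemma chain'_of_pairProd_ne_zero (f : S → S → ℝ) :
    ∀ l : List S, pairProd f l ≠ 0 → l.Chain' (fun a b => f a b ≠ 0)
  | [], _ => List.isChain_nil
  | [_], _ => List.isChain_singleton _
  | a :: b :: l, h => by
    rw [pairProd_cons, mul_ne_zero_iff] at h
    exact List.isChain_cons_cons.2 ⟨h.1, chain'_of_pairProd_ne_zero f (b :: l) h.2⟩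

lemma pairProd_append_singleton (f : S → S → ℝ) :
    ∀ (l : List S) (a b : S), l.getLast? = some a →
      pairProd f (l ++ [b]) = pairProd f l * f a b
  | [], a, b, h => by simp at h
  | [c], a, b, h => by
    simp only [List.getLast?_singleton, Option.some.injEq] at h
    subst h; simp [pairProd]
  | c :: d :: l, a, b, h => by
    have hl : (d :: l).getLast? = some a := by
      rwa [List.getLast?_cons_cons] at h
    have : (c :: d :: l) ++ [b] = c :: ((d :: l) ++ [b]) := by simp
    rw [this]
    have h2 : c :: ((d :: l) ++ [b]) = c :: d :: (l ++ [b]) := by simp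
    rw [h2, pairProd_cons]
    have := pairProd_append_singleton f (d :: l) a b hl
    simp only [List.cons_append] at this
    rw [this, pairProd_cons, mul_assoc]

end Aux
namespace Aux
variable {S : Type*}

lemma chain'_rank {E : S → S → Prop} {rank : S → ℕ}
    (hrank : ∀ s s', E s s' → rank s < rank s') {l : List S} (h : l.Chain' E) :
    l.Chain' (fun a b => rank a < rank b) := h.imp hrank

lemma nodup_of_chain' [Fintype S] {E : S → S → Prop} {rank : S → ℕ}
    (hrank : ∀ s s', E s s' → rank s < rank s') {l : List S} (h : l.Chain' E) :
    l.Nodup := by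
  haveI : IsTrans S (fun a b => rank a < rank b) := ⟨fun a b c h1 h2 => lt_trans h1 h2⟩
  have hp : l.Pairwise (fun a b => rank a < rank b) :=
    List.isChain_iff_pairwise.mp (chain'_rank hrank h)
  exact hp.imp (fun hab => by rintro rfl; exact lt_irrefl _ hab)

lemma chains_finite [Fintype S] (E : S → S → Prop) (rank : S → ℕ)
    (hrank : ∀ s s', E s s' → rank s < rank s') :
    {l : List S | l.Chain' E}.Finite := by
  apply (List.finite_length_le S (Fintype.card S)).subset
  intro l hl
  exact (nodup_of_chain' hrank hl).length_le_card

lemma rank_le_of_chain' {E : S → S → Prop} {rank : S → ℕ}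
    (hrank : ∀ s s', E s s' → rank s < rank s') :
    ∀ (l : List S) (a b : S), l.Chain' E → l.head? = some a → l.getLast? = some b →
      a = b ∨ rank a < rank b
  | [], a, b, _, h, _ => by simp at h
  | [c], a, b, _, ha, hb => by
    simp only [List.head?_cons, Option.some.injEq] at ha
    simp only [List.getLast?_singleton, Option.some.injEq] at hb
    exact Or.inl (ha ▸ hb ▸ rfl)
  | c :: d :: t, a, b, hc, ha, hb => by
    simp only [List.head?_cons, Option.some.injEq] at ha
    subst ha
    unfold List.Chain' at hc; rw [List.isChain_cons_cons] at hc
    rw [List.getLast?_cons_cons] at hb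
    have := rank_le_of_chain' hrank (d :: t) d b hc.2 rfl hb
    have h1 := hrank _ _ hc.1
    rcases this with h | h
    · exact Or.inr (h ▸ h1)
    · exact Or.inr (lt_trans h1 h)

lemma rank_lt_of_chain'_two {E : S → S → Prop} {rank : S → ℕ}
    (hrank : ∀ s s', E s s' → rank s < rank s')
    (c d : S) (t : List S) (b : S) (hc : (c :: d :: t).Chain' E)
    (hb : (c :: d :: t).getLast? = some b) : rank c < rank b := by
  unfold List.Chain' at hc; rw [List.isChain_cons_cons] at hc
  rw [List.getLast?_cons_cons] at hb
  have := rank_le_of_chain' hrank (d :: t) d b hc.2 rfl hb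
  have h1 := hrank _ _ hc.1
  rcases this with h | h
  · exact h ▸ h1
  · exact lt_trans h1 h

/-- Forward trajectory finset from `s`. -/
def Fwd [Fintype S] (E : S → S → Prop) (term : S → Prop) (rank : S → ℕ)
    (hrank : ∀ s s', E s s' → rank s < rank s') (s : S) : Finset (List S) :=
  (chains_finite E rank hrank).toFinset.filter
    (fun l => l.head? = some s ∧ ∃ x, l.getLast? = some x ∧ term x)

lemma mem_Fwd [Fintype S] {E : S → S → Prop} {term : S → Prop} {rank : S → ℕ}
    {hrank : ∀ s s', E s s' → rank s < rank s'} {s : S} {l : List S} :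
    l ∈ Fwd E term rank hrank s ↔
      l.Chain' E ∧ l.head? = some s ∧ ∃ x, l.getLast? = some x ∧ term x := by
  simp [Fwd, Set.Finite.mem_toFinset, and_assoc]

/-- Backward trajectory finset from `s0` to `x`. -/
def Bwd [Fintype S] (E : S → S → Prop) (s0 : S) (rank : S → ℕ)
    (hrank : ∀ s s', E s s' → rank s < rank s') (x : S) : Finset (List S) :=
  (chains_finite E rank hrank).toFinset.filter
    (fun l => l.head? = some s0 ∧ l.getLast? = some x)

lemma mem_Bwd [Fintype S] {E : S → S → Prop} {s0 : S} {rank : S → ℕ}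
    {hrank : ∀ s s', E s s' → rank s < rank s'} {x : S} {l : List S} :
    l ∈ Bwd E s0 rank hrank x ↔
      l.Chain' E ∧ l.head? = some s0 ∧ l.getLast? = some x := by
  simp [Bwd, Set.Finite.mem_toFinset, and_assoc]

end Aux
namespace Aux
variable {S : Type*}

lemma pairProd_cons_head (f : S → S → ℝ) (a b : S) (t : List S) (h : t.head? = some b) :
    pairProd f (a :: t) = f a b * pairProd f t := by
  cases t with
  | nil => simp at h
  | cons c rest =>
    simp only [List.head?_cons, Option.some.injEq] at h
    subst h; rfl

lemma Fwd_term [Fintype S] {E : S → S → Prop} {term : S → Prop} {rank : S → ℕ}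
    {hrank : ∀ s s', E s s' → rank s < rank s'} {s : S} (hs : term s)
    (hterm : ∀ s, term s ↔ ∀ s', ¬ E s s') :
    Fwd E term rank hrank s = {[s]} := by
  ext l
  rw [mem_Fwd, Finset.mem_singleton]
  constructor
  · rintro ⟨hc, hh, x, hl, hx⟩
    cases l with
    | nil => simp at hh
    | cons a t =>
      simp only [List.head?_cons, Option.some.injEq] at hh; subst hh
      cases t with
      | nil => rfl
      | cons b t' =>
        unfold List.Chain' at hc; rw [List.isChain_cons_cons] at hc
        exact absurd hc.1 ((hterm _).mp hs b)
  · rintro rfl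
    exact ⟨List.isChain_singleton s, rfl, s, rfl, hs⟩

lemma Fwd_decomp [Fintype S] {E : S → S → Prop} {term : S → Prop} {rank : S → ℕ}
    {hrank : ∀ s s', E s s' → rank s < rank s'} {s : S} (hs : ¬ term s) :
    Fwd E term rank hrank s
      = (Finset.univ.filter (fun s' => E s s')).biUnion
          (fun s' => (Fwd E term rank hrank s').image (List.cons s)) := by
  ext l
  simp only [Finset.mem_biUnion, Finset.mem_filter, Finset.mem_univ, true_and,
    Finset.mem_image, mem_Fwd]
  constructor
  · rintro ⟨hc, hh, x, hl, hx⟩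
    cases l with
    | nil => simp at hh
    | cons a t =>
      simp only [List.head?_cons, Option.some.injEq] at hh; subst hh
      cases t with
      | nil =>
        simp only [List.getLast?_singleton, Option.some.injEq] at hl
        exact absurd (hl ▸ hx) hs
      | cons b t' =>
        unfold List.Chain' at hc; rw [List.isChain_cons_cons] at hc
        refine ⟨b, hc.1, b :: t', ⟨hc.2, rfl, x, ?_, hx⟩, rfl⟩
        rwa [List.getLast?_cons_cons] at hl
  · rintro ⟨s', hE, t, ⟨hc, hh, x, hl, hx⟩, rfl⟩
    cases t with
    | nil => simp at hh
    | cons b t' =>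
      simp only [List.head?_cons, Option.some.injEq] at hh; subst hh
      refine ⟨List.isChain_cons_cons.mpr ⟨hE, hc⟩, rfl, x, ?_, hx⟩
      rw [List.getLast?_cons_cons]; exact hl

lemma fwd_sum [Fintype S] {E : S → S → Prop} {term : S → Prop}
    (hterm : ∀ s, term s ↔ ∀ s', ¬ E s s') {rank : S → ℕ}
    (hrank : ∀ s s', E s s' → rank s < rank s') {PF : S → S → ℝ}
    (hPF : IsForwardPolicy E term PF) (s : S) :
    ∑ l ∈ Fwd E term rank hrank s, pairProd PF l = 1 := by
  obtain ⟨hPF0, hPFE, hPF1⟩ := hPF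
  set B := Finset.univ.sup rank with hB
  have hle : ∀ s : S, rank s ≤ B := fun s => Finset.le_sup (Finset.mem_univ s)
  suffices H : ∀ n, ∀ s : S, B - rank s < n →
      ∑ l ∈ Fwd E term rank hrank s, pairProd PF l = 1 by
    exact H (B + 1) s (by omega)
  intro n
  induction n with
  | zero => intro s h; omega
  | succ m ih =>
    intro s h
    by_cases hs : term s
    · rw [Fwd_term hs hterm]
      simp [pairProd]
    · rw [Fwd_decomp hs]
      rw [Finset.sum_biUnion]
      · have hstep : ∀ s' ∈ Finset.univ.filter (fun s' => E s s'),
            ∑ l ∈ (Fwd E term rank hrank s').image (List.cons s), pairProd PF l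
              = PF s s' := by
          intro s' hs'
          rw [Finset.mem_filter] at hs'
          rw [Finset.sum_image (fun x _ y _ hxy => by simpa using hxy)]
          have : ∀ t ∈ Fwd E term rank hrank s',
              pairProd PF (s :: t) = PF s s' * pairProd PF t := by
            intro t ht
            exact pairProd_cons_head PF s s' t (mem_Fwd.mp ht).2.1
          rw [Finset.sum_congr rfl this, ← Finset.mul_sum]
          have hr : B - rank s' < m := by
            have h1 := hrank s s' hs'.2
            have h2 := hle s'
            omega
          rw [ih s' hr, mul_one]
        rw [Finset.sum_congr rfl hstep]
        rw [Finset.sum_filter_of_ne (by intro s' _ hne; exact hPFE s s' hne)]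
        exact hPF1 s hs
      · intro s1 h1 s2 h2 hne
        simp only [Function.onFun]
        rw [Finset.disjoint_left]
        intro l hl1 hl2
        simp only [Finset.mem_coe, Finset.mem_image] at hl1 hl2
        obtain ⟨t1, ht1, rfl⟩ := hl1
        obtain ⟨t2, ht2, heq⟩ := hl2
        have : t2 = t1 := by simpa using heq
        subst this
        have e1 := (mem_Fwd.mp ht1).2.1
        have e2 := (mem_Fwd.mp ht2).2.1
        rw [e1] at e2
        exact hne (Option.some_injective _ e2)

end Aux
namespace Aux
variable {S : Type*}

lemma Bwd_s0 [Fintype S] {E : S → S → Prop} {s0 : S} {rank : S → ℕ}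
    {hrank : ∀ s s', E s s' → rank s < rank s'} :
    Bwd E s0 rank hrank s0 = {[s0]} := by
  ext l
  rw [mem_Bwd, Finset.mem_singleton]
  constructor
  · rintro ⟨hc, hh, hl⟩
    cases l with
    | nil => simp at hh
    | cons a t =>
      simp only [List.head?_cons, Option.some.injEq] at hh; subst hh
      cases t with
      | nil => rfl
      | cons b t' =>
        have := rank_lt_of_chain'_two hrank _ b t' _ hc hl
        omega
  · rintro rfl
    exact ⟨List.isChain_singleton s0, rfl, rfl⟩

lemma Bwd_decomp [Fintype S] {E : S → S → Prop} {s0 : S} {rank : S → ℕ}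
    {hrank : ∀ s s', E s s' → rank s < rank s'} {x : S} (hx : x ≠ s0) :
    Bwd E s0 rank hrank x
      = (Finset.univ.filter (fun s => E s x)).biUnion
          (fun s => (Bwd E s0 rank hrank s).image (fun l => l ++ [x])) := by
  ext l
  simp only [Finset.mem_biUnion, Finset.mem_filter, Finset.mem_univ, true_and,
    Finset.mem_image, mem_Bwd]
  constructor
  · rintro ⟨hc, hh, hl⟩
    have hne : l ≠ [] := by rintro rfl; simp at hh
    have hlen2 : 1 < l.length := by
      rcases l with _ | ⟨a, _ | ⟨b, t⟩⟩
      · simp at hh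
      · simp only [List.head?_cons, Option.some.injEq] at hh
        simp only [List.getLast?_singleton, Option.some.injEq] at hl
        exact absurd (hl.symm.trans hh) hx
      · simp
    have hdecl : l.dropLast ++ [l.getLast hne] = l := List.dropLast_append_getLast hne
    have hlast : l.getLast hne = x := by
      rw [List.getLast?_eq_getLast hne] at hl
      exact Option.some_injective _ hl
    have hdne : l.dropLast ≠ [] := by
      intro h0
      have := congrArg List.length hdecl
      rw [h0] at this
      simp at this
      omega
    refine ⟨l.dropLast.getLast hdne, ?_, l.dropLast, ⟨?_, ?_, ?_⟩, by rw [hlast] at hdecl; exact hdecl⟩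
    · -- E (last of dropLast) x
      have hc' : (l.dropLast ++ [x]).Chain' E := by rw [hlast] at hdecl; rwa [hdecl]
      unfold List.Chain' at hc'; rw [List.isChain_append] at hc'
      exact hc'.2.2 (l.dropLast.getLast hdne)
        (by rw [Option.mem_def, List.getLast?_eq_getLast hdne]) x rfl
    · exact hc.prefix (List.dropLast_prefix l)
    · -- head? of dropLast = some s0
      rcases l with _ | ⟨a, _ | ⟨b, t⟩⟩
      · simp at hh
      · simp at hlen2
      · simpa using hh
    · rw [List.getLast?_eq_getLast hdne]
  · rintro ⟨s, hE, t, ⟨hc, hh, hl⟩, rfl⟩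
    have htne : t ≠ [] := by rintro rfl; simp at hh
    refine ⟨?_, ?_, by simp⟩
    · unfold List.Chain'; rw [List.isChain_append]
      refine ⟨hc, List.isChain_singleton x, ?_⟩
      intro a ha y hy
      obtain rfl : x = y := by simpa using hy
      rw [hl] at ha
      obtain rfl : s = a := by simpa using ha
      exact hE
    · rcases t with _ | ⟨a, t'⟩
      · simp at hh
      · simpa using hh

lemma bwd_sum [Fintype S] {E : S → S → Prop} {s0 : S} {rank : S → ℕ}
    (hrank : ∀ s s', E s s' → rank s < rank s') {PB : S → S → ℝ}
    (hPB : IsBackwardPolicy E s0 PB) (x : S) :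
    ∑ l ∈ Bwd E s0 rank hrank x, pairProd (fun a b => PB b a) l = 1 := by
  obtain ⟨hPB0, hPBE, hPB1⟩ := hPB
  suffices H : ∀ n, ∀ x : S, rank x < n →
      ∑ l ∈ Bwd E s0 rank hrank x, pairProd (fun a b => PB b a) l = 1 by
    exact H (rank x + 1) x (by omega)
  intro n
  induction n with
  | zero => intro x h; omega
  | succ m ih =>
    intro x h
    by_cases hx : x = s0
    · subst hx
      rw [Bwd_s0]
      simp [pairProd]
    · rw [Bwd_decomp hx]
      rw [Finset.sum_biUnion]
      · have hstep : ∀ s ∈ Finset.univ.filter (fun s => E s x),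
            ∑ l ∈ (Bwd E s0 rank hrank s).image (fun l => l ++ [x]),
              pairProd (fun a b => PB b a) l = PB x s := by
          intro s hs
          rw [Finset.mem_filter] at hs
          rw [Finset.sum_image (fun a _ b _ hab => by simpa using hab)]
          have : ∀ t ∈ Bwd E s0 rank hrank s,
              pairProd (fun a b => PB b a) (t ++ [x])
                = pairProd (fun a b => PB b a) t * PB x s := by
            intro t ht
            exact pairProd_append_singleton _ t s x (mem_Bwd.mp ht).2.2
          rw [Finset.sum_congr rfl this, ← Finset.sum_mul]
          have hr : rank s < m := by
            have h1 := hrank s x hs.2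
            omega
          rw [ih s hr, one_mul]
        rw [Finset.sum_congr rfl hstep]
        rw [Finset.sum_filter_of_ne (by intro s _ hne; exact hPBE x s hne)]
        exact hPB1 x hx
      · intro s1 h1 s2 h2 hne
        simp only [Function.onFun]
        rw [Finset.disjoint_left]
        intro l hl1 hl2
        simp only [Finset.mem_coe, Finset.mem_image] at hl1 hl2
        obtain ⟨t1, ht1, rfl⟩ := hl1
        obtain ⟨t2, ht2, heq⟩ := hl2
        have : t2 = t1 := by simpa using heq
        subst this
        have e1 := (mem_Bwd.mp ht1).2.2
        have e2 := (mem_Bwd.mp ht2).2.2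
        rw [e1] at e2
        exact hne (Option.some_injective _ e2)

end Aux
namespace Aux

lemma gibbs {α : Type*} (A : Finset α) (p q : α → ℝ)
    (hp : ∀ a ∈ A, 0 ≤ p a) (hq : ∀ a ∈ A, 0 ≤ q a)
    (hac : ∀ a ∈ A, q a = 0 → p a = 0)
    (hsum : ∑ a ∈ A, p a = ∑ a ∈ A, q a)
    (hle : ∑ a ∈ A, p a * Real.log (p a / q a) ≤ 0) :
    ∀ a ∈ A, p a = q a := by
  set g : α → ℝ := fun a => p a * Real.log (p a / q a) - p a + q a with hg
  have key : ∀ a ∈ A, 0 ≤ g a ∧ (g a = 0 → p a = q a) := by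
    intro a ha
    by_cases hp0 : p a = 0
    · constructor
      · simp [hg, hp0]; exact hq a ha
      · intro h0
        simp only [hg, hp0, zero_mul, sub_zero, zero_sub, zero_add] at h0
        rw [hp0]; linarith [h0]
    · have hppos : 0 < p a := lt_of_le_of_ne (hp a ha) (Ne.symm hp0)
      have hq0 : q a ≠ 0 := fun h => hp0 (hac a ha h)
      have hqpos : 0 < q a := lt_of_le_of_ne (hq a ha) (Ne.symm hq0)
      have k2 : Real.log (p a / q a) = - Real.log (q a / p a) := by
        rw [← Real.log_inv]
        congr 1
        field_simp
      have hmul : p a * (q a / p a) = q a := by field_simp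
      constructor
      · have k1 : Real.log (q a / p a) ≤ q a / p a - 1 :=
          Real.log_le_sub_one_of_pos (div_pos hqpos hppos)
        simp only [hg]
        rw [k2]
        nlinarith [k1, hppos, hmul]
      · intro h0
        by_contra hne
        have hne' : q a / p a ≠ 1 := by
          intro h1
          apply hne
          field_simp at h1
          linarith [h1]
        have k1 : Real.log (q a / p a) < q a / p a - 1 :=
          Real.log_lt_sub_one_of_pos (div_pos hqpos hppos) hne'
        simp only [hg] at h0
        rw [k2] at h0
        nlinarith [k1, hppos, hmul]
  have hsg : ∑ a ∈ A, g a ≤ 0 := by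
    simp only [hg]
    rw [Finset.sum_add_distrib, Finset.sum_sub_distrib]
    linarith [hsum, hle]
  have hz : ∀ a ∈ A, g a = 0 := by
    have h0 : ∑ a ∈ A, g a = 0 :=
      le_antisymm hsg (Finset.sum_nonneg (fun a ha => (key a ha).1))
    exact fun a ha =>
      (Finset.sum_eq_zero_iff_of_nonneg (fun a ha => (key a ha).1)).mp h0 a ha
  exact fun a ha => (key a ha).2 (hz a ha)

end Aux
namespace Aux
variable {S : Type*}

lemma exists_optimal [Fintype S] (E : S → S → Prop) (s0 : S) (term : S → Prop)
    (hterm : ∀ s, term s ↔ ∀ s', ¬ E s s')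
    (hreach : ∀ s, Relation.ReflTransGen E s0 s)
    (rank : S → ℕ) (hrank : ∀ s s', E s s' → rank s < rank s')
    (R : S → ℝ) (hR : ∀ x, term x → 0 < R x)
    (Z : ℝ) (hZ : Z = ∑ x ∈ Finset.univ.filter term, R x) (hZpos : 0 < Z) :
    ∃ PF' PB' : S → S → ℝ, IsForwardPolicy E term PF' ∧ IsBackwardPolicy E s0 PB' ∧
      ∀ l : List S, l.head? = some s0 → l.Chain' E →
        (∃ x, l.getLast? = some x ∧ term x) →
        pairProd PF' l = bTraj R Z PB' l := by
  classical
  -- parent function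
  have hparex : ∀ s : S, ∃ p : S, s ≠ s0 → E p s := by
    intro s
    by_cases h : s = s0
    · exact ⟨s0, fun h' => absurd h h'⟩
    · obtain ⟨c, _, hc⟩ := (Relation.ReflTransGen.cases_tail (hreach s)).resolve_left
        (by intro h'; exact h h')
      exact ⟨c, fun _ => hc⟩
  choose par hpar using hparex
  obtain ⟨P, hPdef⟩ : ∃ P : S → S, ∀ s, P s = if s = s0 then s0 else par s :=
    ⟨_, fun s => rfl⟩
  have hPs0 : P s0 = s0 := by rw [hPdef]; simp
  have hPE : ∀ s : S, s ≠ s0 → E (P s) s := by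
    intro s hs
    rw [hPdef, if_neg hs]
    exact hpar s hs
  have hPrank : ∀ s : S, s ≠ s0 → rank (P s) < rank s := fun s hs => hrank _ _ (hPE s hs)
  have hPrank' : ∀ s : S, rank (P s) ≤ rank s := by
    intro s
    by_cases hs : s = s0
    · subst hs; rw [hPs0]
    · exact le_of_lt (hPrank s hs)
  -- child function
  have hchex : ∀ s : S, ∃ c : S, ¬ term s → E s c := by
    intro s
    by_cases h : term s
    · exact ⟨s, fun h' => absurd h h'⟩
    · rw [hterm] at h
      push_neg at h
      obtain ⟨c, hc⟩ := h
      exact ⟨c, fun _ => hc⟩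
  choose child hchild using hchex
  -- ancestor relation
  obtain ⟨anc, hancdef⟩ : ∃ a : S → S → Prop, ∀ s x, a s x ↔ ∃ k, P^[k] x = s :=
    ⟨_, fun s x => Iff.rfl⟩
  have hit : ∀ x : S, anc s0 x := by
    intro x
    suffices H : ∀ n, ∀ x : S, rank x < n → anc s0 x by exact H (rank x + 1) x (by omega)
    intro n
    induction n with
    | zero => intro x h; omega
    | succ m ih =>
      intro x h
      by_cases hx : x = s0
      · exact (hancdef _ _).mpr ⟨0, hx⟩
      · obtain ⟨k, hk⟩ := (hancdef _ _).mp (ih (P x) (by have := hPrank x hx; omega))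
        exact (hancdef _ _).mpr ⟨k + 1, by rw [Function.iterate_succ_apply]; exact hk⟩
  have anc_refl : ∀ x : S, anc x x := fun x => (hancdef _ _).mpr ⟨0, rfl⟩
  have anc_step : ∀ s' x : S, anc s' x → anc (P s') x := by
    intro s' x h
    obtain ⟨k, hk⟩ := (hancdef _ _).mp h
    exact (hancdef _ _).mpr ⟨k + 1, by rw [Function.iterate_succ_apply', hk]⟩
  have rank_iter : ∀ (t : ℕ) (s : S), rank (P^[t] s) ≤ rank s := by
    intro t
    induction t with
    | zero => intro s; simp
    | succ m ih =>
      intro s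
      rw [Function.iterate_succ_apply']
      exact le_trans (hPrank' _) (ih s)
  -- flow
  obtain ⟨F, hFdef⟩ : ∃ F : S → ℝ,
      ∀ s, F s = ∑ x ∈ Finset.univ.filter term, if anc s x then R x else 0 :=
    ⟨_, fun s => rfl⟩
  have hFnonneg : ∀ s, 0 ≤ F s := by
    intro s
    rw [hFdef]
    apply Finset.sum_nonneg
    intro x hx
    rw [Finset.mem_filter] at hx
    split
    · exact le_of_lt (hR x hx.2)
    · rfl
  have hFs0 : F s0 = Z := by
    rw [hFdef, hZ]
    exact Finset.sum_congr rfl (fun x _ => if_pos (hit x))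
  have hFpos_of_anc : ∀ s x : S, term x → anc s x → R x ≤ F s := by
    intro s x hx hax
    rw [hFdef]
    have h := Finset.single_le_sum (f := fun y => if anc s y then R y else 0)
      (fun y hy => by
        show (0:ℝ) ≤ if anc s y then R y else 0
        rw [Finset.mem_filter] at hy
        split
        · exact le_of_lt (hR y hy.2)
        · rfl)
      (Finset.mem_filter.mpr ⟨Finset.mem_univ x, hx⟩)
    rwa [if_pos hax] at h
  have hanc_term : ∀ x x' : S, term x → anc x x' → x' = x := by
    intro x x' hx hax
    obtain ⟨k, hk⟩ := (hancdef _ _).mp hax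
    by_contra hne
    have hk1 : k ≠ 0 := by rintro rfl; exact hne hk
    obtain ⟨j, rfl⟩ := Nat.exists_eq_succ_of_ne_zero hk1
    rw [Function.iterate_succ_apply'] at hk
    by_cases hys0 : P^[j] x' = s0
    · rw [hys0, hPs0] at hk
      have hx'0 : x' ≠ s0 := by rw [← hk] at hne; exact hne
      obtain ⟨c, hc, _⟩ := (Relation.ReflTransGen.cases_head (hreach x')).resolve_left
        (by intro h'; exact hx'0 h'.symm)
      rw [hk] at hc
      exact (hterm x).mp hx c hc
    · exact (hterm x).mp hx (P^[j] x') (hk ▸ hPE _ hys0)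
  have hFterm : ∀ x : S, term x → F x = R x := by
    intro x hx
    rw [hFdef]
    have : ∀ x' ∈ Finset.univ.filter term,
        (if anc x x' then R x' else 0) = if x' = x then R x' else 0 := by
      intro x' _
      congr 1
      simp only [eq_iff_iff]
      exact ⟨hanc_term x x' hx, fun h => h ▸ anc_refl x⟩
    rw [Finset.sum_congr rfl this, Finset.sum_ite_eq' _ x R,
      if_pos (Finset.mem_filter.mpr ⟨Finset.mem_univ x, hx⟩)]
  -- uniqueness of the child through which an ancestry passes
  have huniq : ∀ s s1 s2 x : S, s1 ≠ s0 → P s1 = s → s2 ≠ s0 → P s2 = s →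
      anc s1 x → anc s2 x → s1 = s2 := by
    have key : ∀ s s1 s2 x : S, s1 ≠ s0 → P s1 = s → s2 ≠ s0 → P s2 = s →
        ∀ i j, P^[i] x = s1 → P^[j] x = s2 → i < j → False := by
      intro s s1 s2 x h1 hp1 h2 hp2 i j hi hj hij
      have hstep : P^[i+1] x = s := by
        rw [Function.iterate_succ_apply', hi, hp1]
      have hs2 : s2 = P^[j - (i+1)] s := by
        rw [← hstep, ← Function.iterate_add_apply, ← hj]
        congr 1
        omega
      have hrle : rank s2 ≤ rank s := hs2 ▸ rank_iter _ s
      have hE2 : E s s2 := hp2 ▸ hPE s2 h2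
      have := hrank s s2 hE2
      omega
    intro s s1 s2 x h1 hp1 h2 hp2 ha1 ha2
    obtain ⟨i, hi⟩ := (hancdef _ _).mp ha1
    obtain ⟨j, hj⟩ := (hancdef _ _).mp ha2
    rcases lt_trichotomy i j with h | h | h
    · exact absurd (key s s1 s2 x h1 hp1 h2 hp2 i j hi hj h) (fun f => f)
    · rw [← hi, ← hj, h]
    · exact absurd (key s s2 s1 x h2 hp2 h1 hp1 j i hj hi h) (fun f => f)
  -- flow conservation
  have hcons : ∀ s : S, ¬ term s →
      F s = ∑ s' ∈ Finset.univ.filter (fun s' => s' ≠ s0 ∧ P s' = s), F s' := by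
    intro s hs
    have hswap : ∑ s' ∈ Finset.univ.filter (fun s' => s' ≠ s0 ∧ P s' = s), F s'
        = ∑ x ∈ Finset.univ.filter term,
            ∑ s' ∈ Finset.univ.filter (fun s' => s' ≠ s0 ∧ P s' = s),
              (if anc s' x then R x else 0) := by
      rw [Finset.sum_comm]
      exact Finset.sum_congr rfl (fun s' _ => hFdef s')
    rw [hswap, hFdef]
    apply Finset.sum_congr rfl
    intro x hxmem
    rw [Finset.mem_filter] at hxmem
    have hx : term x := hxmem.2
    have hxs : x ≠ s := fun h => hs (h ▸ hx)
    by_cases hax : anc s x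
    · rw [if_pos hax]
      obtain ⟨k, hk⟩ := (hancdef _ _).mp hax
      have hex : ∃ k, P^[k] x = s := ⟨k, hk⟩
      have hk0 : P^[Nat.find hex] x = s := Nat.find_spec hex
      have hk0ne : Nat.find hex ≠ 0 := by
        intro h
        rw [h] at hk0
        exact hxs hk0
      obtain ⟨j, hj⟩ := Nat.exists_eq_succ_of_ne_zero hk0ne
      have hw : P (P^[j] x) = s := by
        have hw0 := hk0
        rw [hj, Function.iterate_succ_apply'] at hw0
        exact hw0
      have hwne : P^[j] x ≠ s0 := by
        intro h0
        rw [h0, hPs0] at hw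
        have : P^[j] x = s := by rw [h0]; exact hw
        exact Nat.find_min hex (by omega) this
      have hancw : anc (P^[j] x) x := (hancdef _ _).mpr ⟨j, rfl⟩
      rw [Finset.sum_eq_single_of_mem (P^[j] x)
        (Finset.mem_filter.mpr ⟨Finset.mem_univ _, hwne, hw⟩)]
      · rw [if_pos hancw]
      · intro s'' hmem hne
        rw [Finset.mem_filter] at hmem
        rw [if_neg]
        intro hanc''
        exact hne (huniq s s'' (P^[j] x) x hmem.2.1 hmem.2.2 hwne hw hanc'' hancw)
    · rw [if_neg hax]
      symm
      apply Finset.sum_eq_zero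
      intro s' hmem
      rw [Finset.mem_filter] at hmem
      rw [if_neg]
      intro hanc'
      exact hax (hmem.2.2 ▸ anc_step s' x hanc')
  -- the policies
  obtain ⟨PF', hPF'def⟩ : ∃ PF' : S → S → ℝ, ∀ s s', PF' s s' =
      if term s then 0
      else if F s = 0 then (if s' = child s then 1 else 0)
      else (if s' ≠ s0 ∧ P s' = s then F s' / F s else 0) :=
    ⟨_, fun s s' => rfl⟩
  obtain ⟨PB', hPB'def⟩ : ∃ PB' : S → S → ℝ, ∀ s' s, PB' s' s =
      if s' = s0 then 0 else (if s = P s' then 1 else 0) :=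
    ⟨_, fun s' s => rfl⟩
  refine ⟨PF', PB', ⟨?_, ?_, ?_⟩, ⟨?_, ?_, ?_⟩, ?_⟩
  · intro s s'
    rw [hPF'def]
    split
    · rfl
    · split
      · split
        · exact zero_le_one
        · rfl
      · split
        · exact div_nonneg (hFnonneg s') (hFnonneg s)
        · rfl
  · intro s s' h
    rw [hPF'def] at h
    split at h
    · exact absurd rfl h
    · split at h
      · split at h
        · rename_i hterm' _ hch
          subst hch
          exact hchild s hterm'
        · exact absurd rfl h
      · split at h
        · rename_i hcond
          exact hcond.2 ▸ hPE s' hcond.1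
        · exact absurd rfl h
  · intro s hs
    have : ∀ s', PF' s s' =
        if F s = 0 then (if s' = child s then 1 else 0)
        else (if s' ≠ s0 ∧ P s' = s then F s' / F s else 0) := by
      intro s'; rw [hPF'def, if_neg hs]
    rw [Finset.sum_congr rfl (fun s' _ => this s')]
    by_cases hF0 : F s = 0
    · simp only [if_pos hF0]
      rw [Finset.sum_ite_eq' Finset.univ (child s) (fun _ => (1:ℝ))]
      simp
    · simp only [if_neg hF0]
      rw [← Finset.sum_filter, ← Finset.sum_div, ← hcons s hs, div_self hF0]
  · intro s' s
    rw [hPB'def]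
    split
    · rfl
    · split
      · exact zero_le_one
      · rfl
  · intro s' s h
    rw [hPB'def] at h
    split at h
    · exact absurd rfl h
    · split at h
      · rename_i hne heq
        exact heq ▸ hPE s' hne
      · exact absurd rfl h
  · intro s' hs'
    have : ∀ s, PB' s' s = if s = P s' then 1 else 0 := by
      intro s; rw [hPB'def, if_neg hs']
    rw [Finset.sum_congr rfl (fun s _ => this s)]
    rw [Finset.sum_ite_eq' Finset.univ (P s') (fun _ => (1:ℝ))]
    simp
  · -- pointwise equality on trajectories
    intro l hh hc hlast
    obtain ⟨x, hlx, hx⟩ := hlast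
    by_cases hchain : l.Chain' (fun a b => b ≠ s0 ∧ P b = a)
    · -- the unique backward-supported path
      have tele : ∀ (t : List S) (a y : S), t.Chain' (fun a b => b ≠ s0 ∧ P b = a) →
          t.head? = some a → t.getLast? = some y → term y →
          anc a y ∧ pairProd PF' t = F y / F a := by
        intro t
        induction t with
        | nil => intro a y _ ha _ _; simp at ha
        | cons c rest ih =>
          intro a y hch ha hy hty
          simp only [List.head?_cons, Option.some.injEq] at ha
          subst ha
          cases rest with
          | nil =>
            simp only [List.getLast?_singleton, Option.some.injEq] at hy
            subst hy
            refine ⟨anc_refl c, ?_⟩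
            have hFc : F c ≠ 0 :=
              ne_of_gt (lt_of_lt_of_le (hR c hty) (hFpos_of_anc c c hty (anc_refl c)))
            rw [div_self hFc]
            rfl
          | cons d rest' =>
            unfold List.Chain' at hch; rw [List.isChain_cons_cons] at hch
            rw [List.getLast?_cons_cons] at hy
            obtain ⟨hancd, hprod⟩ := ih d y hch.2 rfl hy hty
            have hanca : anc c y := by
              have := anc_step d y hancd
              rwa [hch.1.2] at this
            refine ⟨hanca, ?_⟩
            have hFa : 0 < F c := lt_of_lt_of_le (hR y hty) (hFpos_of_anc c y hty hanca)
            have hFd : 0 < F d := lt_of_lt_of_le (hR y hty) (hFpos_of_anc d y hty hancd)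
            have hEad : E c d := hch.1.2 ▸ hPE d hch.1.1
            have hnta : ¬ term c := by
              intro h
              exact (hterm c).mp h d hEad
            have hPF'ad : PF' c d = F d / F c := by
              rw [hPF'def, if_neg hnta, if_neg (ne_of_gt hFa), if_pos ⟨hch.1.1, hch.1.2⟩]
            rw [pairProd_cons, hPF'ad, hprod]
            field_simp
      obtain ⟨-, hp⟩ := tele l s0 x hchain hh hlx hx
      have hq1 : pairProd (fun a b => PB' b a) l = 1 := by
        apply pairProd_eq_one
        apply hchain.imp
        intro a b hab
        rw [hPB'def, if_neg hab.1, if_pos hab.2.symm]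
      rw [hp, hFs0, hFterm x hx]
      simp only [bTraj, hlx, Option.map_some, Option.getD_some, hq1, mul_one]
    · have hq0 : pairProd (fun a b => PB' b a) l = 0 := by
        by_contra h
        apply hchain
        have hcn := chain'_of_pairProd_ne_zero _ l h
        apply hcn.imp
        intro a b hab
        rw [hPB'def] at hab
        by_cases h1 : b = s0
        · rw [if_pos h1] at hab; exact absurd rfl hab
        · rw [if_neg h1] at hab
          by_cases h2 : a = P b
          · exact ⟨h1, h2.symm⟩
          · rw [if_neg h2] at hab; exact absurd rfl hab
      have hp0 : pairProd PF' l = 0 := by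
        by_contra h
        apply hchain
        have hcn := chain'_of_pairProd_ne_zero _ l h
        have prop : ∀ (t : List S) (a : S), t.head? = some a → F a ≠ 0 →
            t.Chain' (fun a b => PF' a b ≠ 0) →
            t.Chain' (fun a b => b ≠ s0 ∧ P b = a) := by
          intro t
          induction t with
          | nil => intro a _ _ _; exact List.isChain_nil
          | cons c rest ih =>
            intro a ha hFa hcc
            simp only [List.head?_cons, Option.some.injEq] at ha
            subst ha
            cases rest with
            | nil => exact List.isChain_singleton _
            | cons d rest' =>
              unfold List.Chain' at hcc ⊢; rw [List.isChain_cons_cons] at hcc ⊢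
              have hPF := hcc.1
              rw [hPF'def] at hPF
              by_cases ht : term c
              · rw [if_pos ht] at hPF; exact absurd rfl hPF
              rw [if_neg ht, if_neg hFa] at hPF
              by_cases hcond : d ≠ s0 ∧ P d = c
              · have hFd : F d ≠ 0 := by
                  rw [if_pos hcond] at hPF
                  intro h0; rw [h0] at hPF; simp at hPF
                exact ⟨hcond, ih d rfl hFd hcc.2⟩
              · rw [if_neg hcond] at hPF; exact absurd rfl hPF
        exact prop l s0 hh (by rw [hFs0]; exact ne_of_gt hZpos) hcn
      rw [hp0]
      simp only [bTraj, hq0, mul_zero]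

end Aux


namespace Aux

lemma klDivFin_eq_zero_of_eq {α : Type*} (A : Finset α) (p q : α → ℝ)
    (h : ∀ a ∈ A, p a = q a) : klDivFin A p q = 0 := by
  rw [klDivFin, if_pos (fun a ha hq => (h a ha).trans hq)]
  rw [Finset.sum_eq_zero, ENNReal.ofReal_zero]
  intro a ha
  rw [h a ha]
  by_cases h0 : q a = 0
  · rw [h0]; simp
  · rw [div_self h0, Real.log_one, mul_zero]

end Aux


/-- Any global minimizer of the joint KL objective over forward and backward
policies achieves value `0`, satisfies trajectory balance, and hence induces the
marginal distribution `R(x)/Z` over terminal states. -/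
theorem global_minimizer_trajectory_balance
    {S : Type*} [Fintype S] [DecidableEq S]
    (E : S → S → Prop) (s0 : S) (term : S → Prop)
    (hterm : ∀ s, term s ↔ ∀ s', ¬ E s s')
    (hinit : ∀ s, ¬ E s s0)
    (hreach : ∀ s, Relation.ReflTransGen E s0 s)
    (rank : S → ℕ) (hrank : ∀ s s', E s s' → rank s < rank s')
    (T : Finset (List S))
    (hT : ∀ l, l ∈ T ↔
      (l.head? = some s0 ∧ l.Chain' E ∧ ∃ x, l.getLast? = some x ∧ term x))
    (R : S → ℝ) (hR : ∀ x, term x → 0 < R x)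
    (Z : ℝ) (hZ : Z = ∑ x ∈ Finset.univ.filter term, R x) (hZpos : 0 < Z)
    (PF PB : S → S → ℝ)
    (hPF : IsForwardPolicy E term PF)
    (hPB : IsBackwardPolicy E s0 PB)
    (hmin : ∀ PF' PB' : S → S → ℝ, IsForwardPolicy E term PF' →
      IsBackwardPolicy E s0 PB' →
      klDivFin T (fun l => pairProd PF l) (fun l => bTraj R Z PB l)
        ≤ klDivFin T (fun l => pairProd PF' l) (fun l => bTraj R Z PB' l)) :
    klDivFin T (fun l => pairProd PF l) (fun l => bTraj R Z PB l) = 0 ∧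
    (∀ l ∈ T, pairProd PF l = bTraj R Z PB l) ∧
    (∀ x, term x →
      ∑ l ∈ T.filter (fun l => l.getLast? = some x), pairProd PF l = R x / Z) := by
  classical
  obtain ⟨PF', PB', hPF', hPB', heq⟩ :=
    Aux.exists_optimal E s0 term hterm hreach rank hrank R hR Z hZ hZpos
  have hopt : klDivFin T (fun l => pairProd PF' l) (fun l => bTraj R Z PB' l) = 0 :=
    Aux.klDivFin_eq_zero_of_eq _ _ _ (fun l hl => by
      obtain ⟨h1, h2, h3⟩ := (hT l).mp hl
      exact heq l h1 h2 h3)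
  have hzero : klDivFin T (fun l => pairProd PF l) (fun l => bTraj R Z PB l) = 0 :=
    le_antisymm (hopt ▸ hmin PF' PB' hPF' hPB') zero_le
  have hTF : T = Aux.Fwd E term rank hrank s0 := by
    ext l
    rw [hT, Aux.mem_Fwd]
    tauto
  have hsump : ∑ l ∈ T, pairProd PF l = 1 := by
    rw [hTF]; exact Aux.fwd_sum hterm hrank hPF s0
  have hfiber : ∀ x, term x →
      T.filter (fun l => l.getLast? = some x) = Aux.Bwd E s0 rank hrank x := by
    intro x hx
    ext l
    rw [Finset.mem_filter, hT, Aux.mem_Bwd]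
    constructor
    · rintro ⟨⟨h1, h2, -⟩, h4⟩; exact ⟨h2, h1, h4⟩
    · rintro ⟨h2, h1, h4⟩; exact ⟨⟨h1, h2, x, h4, hx⟩, h4⟩
  have hq_fiber : ∀ x, term x →
      ∑ l ∈ T.filter (fun l => l.getLast? = some x), bTraj R Z PB l = R x / Z := by
    intro x hx
    rw [hfiber x hx]
    have hcg : ∀ l ∈ Aux.Bwd E s0 rank hrank x,
        bTraj R Z PB l = (R x / Z) * pairProd (fun a b => PB b a) l := by
      intro l hl
      have h4 := (Aux.mem_Bwd.mp hl).2.2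
      simp only [bTraj, h4, Option.map_some, Option.getD_some]
    rw [Finset.sum_congr rfl hcg, ← Finset.mul_sum, Aux.bwd_sum hrank hPB x, mul_one]
  have hsumq : ∑ l ∈ T, bTraj R Z PB l = 1 := by
    have hmap : ∀ l ∈ T, (l.getLast?.getD s0) ∈ Finset.univ.filter term := by
      intro l hl
      obtain ⟨-, -, x, h4, hx⟩ := (hT l).mp hl
      rw [h4]
      exact Finset.mem_filter.mpr ⟨Finset.mem_univ _, hx⟩
    rw [← Finset.sum_fiberwise_of_maps_to hmap (fun l => bTraj R Z PB l)]
    have hcg : ∀ x ∈ Finset.univ.filter term,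
        ∑ l ∈ T.filter (fun l => l.getLast?.getD s0 = x), bTraj R Z PB l = R x / Z := by
      intro x hxm
      rw [Finset.mem_filter] at hxm
      have hfe : T.filter (fun l => l.getLast?.getD s0 = x)
          = T.filter (fun l => l.getLast? = some x) := by
        apply Finset.filter_congr
        intro l hl
        obtain ⟨-, -, x', h4, -⟩ := (hT l).mp hl
        rw [h4]
        simp
      rw [hfe]
      exact hq_fiber x hxm.2
    rw [Finset.sum_congr rfl hcg, ← Finset.sum_div, ← hZ, div_self (ne_of_gt hZpos)]
  have hklsplit : (∀ l ∈ T, bTraj R Z PB l = 0 → pairProd PF l = 0) ∧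
      (∑ l ∈ T, pairProd PF l * Real.log (pairProd PF l / bTraj R Z PB l)) ≤ 0 := by
    rw [klDivFin] at hzero
    by_cases hac : ∀ l ∈ T, bTraj R Z PB l = 0 → pairProd PF l = 0
    · rw [if_pos hac] at hzero
      exact ⟨hac, ENNReal.ofReal_eq_zero.mp hzero⟩
    · rw [if_neg hac] at hzero
      exact absurd hzero (by simp)
  have hpq : ∀ l ∈ T, pairProd PF l = bTraj R Z PB l := by
    apply Aux.gibbs T _ _ ?_ ?_ hklsplit.1 (hsump.trans hsumq.symm) hklsplit.2
    · exact fun l _ => Aux.pairProd_nonneg PF hPF.1 l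
    · intro l hl
      obtain ⟨-, -, x, h4, hx⟩ := (hT l).mp hl
      simp only [bTraj, h4, Option.map_some, Option.getD_some]
      exact mul_nonneg (div_nonneg (le_of_lt (hR x hx)) (le_of_lt hZpos))
        (Aux.pairProd_nonneg _ (fun a b => hPB.1 b a) l)
  refine ⟨hzero, hpq, ?_⟩
  intro x hx
  rw [Finset.sum_congr rfl (fun l hl => hpq l (Finset.mem_filter.mp hl).1)]
  exact hq_fiber x hx
end
end

section
/- Convergence theorem for trajectory likelihood maximization: suppose (1) the backward policy sequence is stable, i.e., sup_{t≥0} ‖P_B^T − P_B^{T+t}‖_1 → 0 as T → ∞ (Cauchy), and (2) the average regret (1/T) Σ_{t=1}^T KL(P^{P_F^t} ‖ P^{P_B^t}) → 0 as T → ∞. Then there exists a forward policy P_F* whose trajectory distribution satisfies trajectory balance (hence induces the marginal R(x)/Z on terminal states) such that (1/T) Σ_{t=1}^T P^{P_F^t} → P^{P_F*} as T → ∞. -/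
open scoped BigOperators Classical ENNReal

noncomputable section

namespace TLMProof
open Finset Filter Real
set_option linter.unusedSectionVars false

variable {S : Type*} [Fintype S] [DecidableEq S]

lemma pairProd_nonneg {f : S → S → ℝ} (hf : ∀ a b, 0 ≤ f a b) :
    ∀ l : List S, 0 ≤ pairProd f l
  | [] => zero_le_one
  | [_] => zero_le_one
  | a :: b :: l => mul_nonneg (hf a b) (pairProd_nonneg hf (b :: l))

lemma pairProd_cons {f : S → S → ℝ} {l : List S} {b : S} (hl : l.head? = some b) (a : S) :
    pairProd f (a :: l) = f a b * pairProd f l := by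
  cases l with
  | nil => simp at hl
  | cons c t => simp only [List.head?_cons, Option.some.injEq] at hl; subst hl; rfl

def Kmat (rank : S → ℕ) (PB : S → S → ℝ) (x s : S) : ℝ :=
  if x = s then 1
  else ∑ y ∈ (univ.filter (fun y => rank y < rank x)).attach,
    PB x y.1 * Kmat rank PB y.1 s
termination_by rank x
decreasing_by exact (mem_filter.mp y.2).2

lemma Kmat_def (rank : S → ℕ) (PB : S → S → ℝ) (x s : S) : Kmat rank PB x s =
    if x = s then 1 else ∑ y ∈ univ.filter (fun y => rank y < rank x), PB x y * Kmat rank PB y s := by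
  rw [Kmat]
  exact if_congr Iff.rfl rfl
    (Finset.sum_attach (univ.filter (fun y => rank y < rank x))
      (fun y => PB x y * Kmat rank PB y s))

variable {E : S → S → Prop} {s0 : S} {term : S → Prop} {rank : S → ℕ} {PB : S → S → ℝ}

section Klemmas
variable (hrank : ∀ s s', E s s' → rank s < rank s') (hPB : IsBackwardPolicy E s0 PB)
include hrank hPB

lemma hPBrank : ∀ a b, PB a b ≠ 0 → rank b < rank a :=
  fun a b h => hrank b a (hPB.2.1 a b h)

lemma K_self (x : S) : Kmat rank PB x x = 1 := by rw [Kmat_def]; simp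

lemma K_eq_sum {x s : S} (hxs : x ≠ s) :
    Kmat rank PB x s = ∑ y : S, PB x y * Kmat rank PB y s := by
  rw [Kmat_def, if_neg hxs]
  apply Finset.sum_subset (Finset.subset_univ _)
  intro y _ hy
  have h0 : PB x y = 0 := by
    by_contra h
    exact hy (mem_filter.mpr ⟨mem_univ _, hPBrank hrank hPB _ _ h⟩)
  simp [h0]

lemma K_nonneg (x s : S) : 0 ≤ Kmat rank PB x s := by
  have H : ∀ n x, rank x < n → ∀ s, 0 ≤ Kmat rank PB x s := by
    intro n
    induction n with
    | zero => omega
    | succ n ih =>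
      intro x hx s
      rw [Kmat_def]
      split
      · exact zero_le_one
      · refine Finset.sum_nonneg fun y hy => mul_nonneg (hPB.1 _ _) (ih y ?_ s)
        have := (mem_filter.mp hy).2
        omega
  exact H (rank x + 1) x (Nat.lt_succ_self _) s

lemma K_rank_lt : ∀ x s : S, rank x < rank s → Kmat rank PB x s = 0 := by
  have H : ∀ n x, rank x < n → ∀ s, rank x < rank s → Kmat rank PB x s = 0 := by
    intro n
    induction n with
    | zero => omega
    | succ n ih =>
      intro x hx s hxs
      rw [Kmat_def, if_neg (by rintro rfl; omega)]
      refine Finset.sum_eq_zero fun y hy => ?_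
      have h1 := (mem_filter.mp hy).2
      rw [ih y (by omega) s (by omega), mul_zero]
  exact fun x s h => H (rank x + 1) x (Nat.lt_succ_self _) s h

lemma K_s0 : ∀ x, Kmat rank PB x s0 = 1 := by
  have H : ∀ n x, rank x < n → Kmat rank PB x s0 = 1 := by
    intro n
    induction n with
    | zero => omega
    | succ n ih =>
      intro x hx
      rcases eq_or_ne x s0 with rfl | hx0
      · exact K_self hrank hPB x
      · rw [K_eq_sum hrank hPB hx0]
        have e : ∀ y ∈ univ, PB x y * Kmat rank PB y s0 = PB x y := by
          intro y _
          rcases eq_or_ne (PB x y) 0 with h | h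
          · simp [h]
          · rw [ih y (by have := hPBrank hrank hPB x y h; omega), mul_one]
        rw [Finset.sum_congr rfl e]
        exact hPB.2.2 x hx0
  exact fun x => H (rank x + 1) x (Nat.lt_succ_self _)

lemma K_term (hterm : ∀ s, term s ↔ ∀ s', ¬ E s s') {s : S} (hs : term s) :
    ∀ x, x ≠ s → Kmat rank PB x s = 0 := by
  have H : ∀ n x, rank x < n → x ≠ s → Kmat rank PB x s = 0 := by
    intro n
    induction n with
    | zero => omega
    | succ n ih =>
      intro x hx hxs
      rw [K_eq_sum hrank hPB hxs]
      refine Finset.sum_eq_zero fun y _ => ?_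
      rcases eq_or_ne (PB x y) 0 with h | h
      · simp [h]
      · rcases eq_or_ne y s with rfl | hys
        · exact absurd (hPB.2.1 x y h) ((hterm y).1 hs x)
        · rw [ih y (by have := hPBrank hrank hPB x y h; omega) hys, mul_zero]
  exact fun x hxs => H (rank x + 1) x (Nat.lt_succ_self _) hxs

lemma K_decomp (hterm : ∀ s, term s ↔ ∀ s', ¬ E s s') :
    ∀ x s : S, ¬ term s → x ≠ s →
      Kmat rank PB x s = ∑ s1 : S, PB s1 s * Kmat rank PB x s1 := by
  have H : ∀ n x, rank x < n → ∀ s, ¬ term s → x ≠ s →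
      Kmat rank PB x s = ∑ s1 : S, PB s1 s * Kmat rank PB x s1 := by
    intro n
    induction n with
    | zero => omega
    | succ n ih =>
      intro x hx s hs hxs
      have step1 : Kmat rank PB x s
          = PB x s + ∑ y ∈ univ.erase s, PB x y * Kmat rank PB y s := by
        rw [K_eq_sum hrank hPB hxs, ← Finset.add_sum_erase _ _ (mem_univ s),
          K_self hrank hPB, mul_one]
      have step2 : ∀ y ∈ univ.erase s,
          PB x y * Kmat rank PB y s
            = PB x y * ∑ s1 : S, PB s1 s * Kmat rank PB y s1 := by
        intro y hy
        rcases eq_or_ne (PB x y) 0 with h | h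
        · simp [h]
        · rw [ih y (by have := hPBrank hrank hPB x y h; omega) s hs (Finset.ne_of_mem_erase hy)]
      have zsum : ∀ s1 : S, PB s1 s * Kmat rank PB s s1 = 0 := by
        intro s1
        rcases eq_or_ne (PB s1 s) 0 with h | h
        · simp [h]
        · rw [K_rank_lt hrank hPB s s1 (hPBrank hrank hPB s1 s h), mul_zero]
      have step3 : ∑ y ∈ univ.erase s, PB x y * ∑ s1 : S, PB s1 s * Kmat rank PB y s1
          = ∑ y : S, PB x y * ∑ s1 : S, PB s1 s * Kmat rank PB y s1 := by
        rw [← Finset.add_sum_erase _ (fun y => PB x y * ∑ s1 : S, PB s1 s * Kmat rank PB y s1)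
          (mem_univ s)]
        rw [Finset.sum_eq_zero (fun s1 _ => zsum s1), mul_zero, zero_add]
      have step4 : ∑ y : S, PB x y * ∑ s1 : S, PB s1 s * Kmat rank PB y s1
          = ∑ s1 : S, PB s1 s * ∑ y : S, PB x y * Kmat rank PB y s1 := by
        simp_rw [Finset.mul_sum]
        rw [Finset.sum_comm]
        refine Finset.sum_congr rfl fun s1 _ => Finset.sum_congr rfl fun y _ => by ring
      have zsum2 : ∑ y : S, PB x y * Kmat rank PB y x = 0 := by
        refine Finset.sum_eq_zero fun y _ => ?_
        rcases eq_or_ne (PB x y) 0 with h | h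
        · simp [h]
        · rw [K_rank_lt hrank hPB y x (hPBrank hrank hPB x y h), mul_zero]
      have step5 : ∑ s1 : S, PB s1 s * ∑ y : S, PB x y * Kmat rank PB y s1
          = ∑ s1 ∈ univ.erase x, PB s1 s * Kmat rank PB x s1 := by
        rw [← Finset.add_sum_erase _ (fun s1 => PB s1 s * ∑ y : S, PB x y * Kmat rank PB y s1)
          (mem_univ x), zsum2, mul_zero, zero_add]
        refine Finset.sum_congr rfl fun s1 hs1 => ?_
        rw [← K_eq_sum hrank hPB (Ne.symm (Finset.ne_of_mem_erase hs1))]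
      rw [step1, Finset.sum_congr rfl step2, step3, step4, step5,
        ← Finset.add_sum_erase _ (fun s1 => PB s1 s * Kmat rank PB x s1) (mem_univ x),
        K_self hrank hPB, mul_one]
  exact fun x s hs hxs => H (rank x + 1) x (Nat.lt_succ_self _) s hs hxs

end Klemmas
variable {R : S → ℝ} {Z : ℝ}

def Fflow (term : S → Prop) (rank : S → ℕ) (R : S → ℝ) (Z : ℝ) (PB : S → S → ℝ) (s : S) : ℝ :=
  ∑ x ∈ univ.filter term, (R x / Z) * Kmat rank PB x s

section Flemmas
variable (hrank : ∀ s s', E s s' → rank s < rank s') (hPB : IsBackwardPolicy E s0 PB)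
  (hterm : ∀ s, term s ↔ ∀ s', ¬ E s s') (hR : ∀ x, term x → 0 < R x) (hZpos : 0 < Z)
include hrank hPB hterm hR hZpos

lemma F_nonneg (s : S) : 0 ≤ Fflow term rank R Z PB s :=
  Finset.sum_nonneg fun x hx => mul_nonneg
    (div_nonneg (hR x (mem_filter.mp hx).2).le hZpos.le) (K_nonneg hrank hPB x s)

lemma F_term {a : S} (ha : term a) : Fflow term rank R Z PB a = R a / Z := by
  unfold Fflow
  rw [Finset.sum_eq_single a]
  · rw [K_self hrank hPB, mul_one]
  · intro x hx hxa
    rw [K_term hrank hPB hterm ha x hxa, mul_zero]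
  · intro h
    exact absurd (mem_filter.mpr ⟨mem_univ a, ha⟩) h

lemma F_s0 (hZ : Z = ∑ x ∈ univ.filter term, R x) : Fflow term rank R Z PB s0 = 1 := by
  unfold Fflow
  have e : ∀ x ∈ univ.filter term, R x / Z * Kmat rank PB x s0 = R x / Z := by
    intro x _
    rw [K_s0 hrank hPB x, mul_one]
  rw [Finset.sum_congr rfl e, ← Finset.sum_div, ← hZ, div_self hZpos.ne']

lemma F_conserv {s : S} (hs : ¬ term s) :
    ∑ s1 : S, PB s1 s * Fflow term rank R Z PB s1 = Fflow term rank R Z PB s := by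
  unfold Fflow
  simp_rw [Finset.mul_sum]
  rw [Finset.sum_comm]
  refine Finset.sum_congr rfl fun x hx => ?_
  have hxs : x ≠ s := fun h => hs (h ▸ (mem_filter.mp hx).2)
  rw [K_decomp hrank hPB hterm x s hs hxs, Finset.mul_sum]
  refine Finset.sum_congr rfl fun s1 _ => by ring

lemma chain_rank (l : List S) (hc : l.Chain' E) :
    ∀ s x, l.head? = some s → l.getLast? = some x → l.length + rank s ≤ rank x + 1 := by
  induction l with
  | nil => intro s x h; simp at h
  | cons a t ih =>
    intro s x hh hl
    simp only [List.head?_cons, Option.some.injEq] at hh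
    subst hh
    cases t with
    | nil =>
      simp only [List.getLast?_singleton, Option.some.injEq] at hl
      subst hl
      simp only [List.length_singleton]
      omega
    | cons b t' =>
      rw [List.Chain', List.isChain_cons_cons] at hc
      rw [List.getLast?_cons_cons] at hl
      have h1 := ih hc.2 b x rfl hl
      have h2 := hrank a b hc.1
      simp only [List.length_cons] at *
      omega

lemma chain_le_K : ∀ (l : List S), l.Chain' E → ∀ s x, l.head? = some s →
    l.getLast? = some x →
    pairProd (fun a b => PB b a) l ≤ Kmat rank PB x s := by
  intro l
  induction l with
  | nil => intro _ s x h; simp at h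
  | cons a t ih =>
    intro hc s x hh hl
    simp only [List.head?_cons, Option.some.injEq] at hh
    subst hh
    cases t with
    | nil =>
      simp only [List.getLast?_singleton, Option.some.injEq] at hl
      subst hl
      rw [K_self hrank hPB]
      simp [pairProd]
    | cons b t' =>
      rw [List.Chain', List.isChain_cons_cons] at hc
      rw [List.getLast?_cons_cons] at hl
      have hrk := chain_rank hrank hPB hterm hR hZpos _ hc.2 b x rfl hl
      have hab := hrank a b hc.1
      have hxs : x ≠ a := by
        intro h
        subst h
        simp only [List.length_cons] at hrk
        omega
      have hterm_a : ¬ term a := fun h => (hterm a).1 h b hc.1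
      have h1 : pairProd (fun a b => PB b a) (a :: b :: t')
          = PB b a * pairProd (fun a b => PB b a) (b :: t') := rfl
      rw [h1]
      calc PB b a * pairProd (fun a b => PB b a) (b :: t')
          ≤ PB b a * Kmat rank PB x b :=
            mul_le_mul_of_nonneg_left (ih hc.2 b x rfl hl) (hPB.1 b a)
        _ ≤ ∑ s1 : S, PB s1 a * Kmat rank PB x s1 :=
            Finset.single_le_sum (f := fun s1 => PB s1 a * Kmat rank PB x s1)
              (fun s1 _ => mul_nonneg (hPB.1 s1 a) (K_nonneg hrank hPB x s1)) (mem_univ b)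
        _ = Kmat rank PB x a := (K_decomp hrank hPB hterm x a hterm_a hxs).symm

end Flemmas

def pick (E : S → S → Prop) (s0 : S) (s : S) : S :=
  if h : ∃ s', E s s' then Classical.choose h else s0

lemma pick_spec (hterm : ∀ s, term s ↔ ∀ s', ¬ E s s') {s : S} (hs : ¬ term s) :
    E s (pick E s0 s) := by
  have h : ∃ s', E s s' := by
    by_contra h
    push_neg at h
    exact hs ((hterm s).2 h)
  rw [pick, dif_pos h]
  exact Classical.choose_spec h

def PFstarFun (E : S → S → Prop) (s0 : S) (term : S → Prop) (rank : S → ℕ)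
    (R : S → ℝ) (Z : ℝ) (PB : S → S → ℝ) : S → S → ℝ := fun s s' =>
  if term s then 0
  else if Fflow term rank R Z PB s = 0 then (if s' = pick E s0 s then 1 else 0)
  else PB s' s * Fflow term rank R Z PB s' / Fflow term rank R Z PB s

section PFlemmas
variable (hrank : ∀ s s', E s s' → rank s < rank s') (hPB : IsBackwardPolicy E s0 PB)
  (hterm : ∀ s, term s ↔ ∀ s', ¬ E s s') (hR : ∀ x, term x → 0 < R x) (hZpos : 0 < Z)
include hrank hPB hterm hR hZpos

lemma PFstar_forward : IsForwardPolicy E term (PFstarFun E s0 term rank R Z PB) := by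
  refine ⟨?_, ?_, ?_⟩
  · intro s s'
    simp only [PFstarFun]
    split
    · exact le_refl 0
    · split
      · split <;> norm_num
      · have h1 := F_nonneg hrank hPB hterm hR hZpos (s := s)
        have h2 := F_nonneg hrank hPB hterm hR hZpos (s := s')
        have h3 : (0:ℝ) ≤ PB s' s := hPB.1 s' s
        positivity
  · intro s s' hne
    simp only [PFstarFun] at hne
    by_cases hts : term s
    · rw [if_pos hts] at hne; exact absurd rfl hne
    · rw [if_neg hts] at hne
      by_cases hF : Fflow term rank R Z PB s = 0
      · rw [if_pos hF] at hne
        by_cases hpk : s' = pick E s0 s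
        · rw [hpk]; exact pick_spec hterm hts
        · rw [if_neg hpk] at hne; exact absurd rfl hne
      · rw [if_neg hF] at hne
        have hP : PB s' s ≠ 0 := fun h => by rw [h] at hne; simp at hne
        exact hPB.2.1 s' s hP
  · intro s hs
    simp only [PFstarFun, if_neg hs]
    by_cases hF : Fflow term rank R Z PB s = 0
    · simp only [if_pos hF]
      rw [Finset.sum_ite_eq' univ (pick E s0 s) (fun _ => (1:ℝ))]
      simp
    · simp only [if_neg hF]
      simp_rw [div_eq_mul_inv, ← Finset.sum_mul]
      rw [F_conserv hrank hPB hterm hR hZpos hs]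
      exact mul_inv_cancel₀ hF

omit hrank hPB hterm hR hZpos in
lemma bTraj_cons_cons (a b : S) (t : List S) :
    bTraj R Z PB (a :: b :: t) = PB b a * bTraj R Z PB (b :: t) := by
  unfold bTraj
  rw [List.getLast?_cons_cons]
  have h : pairProd (fun a b => PB b a) (a :: b :: t)
      = PB b a * pairProd (fun a b => PB b a) (b :: t) := rfl
  rw [h]
  ring

lemma bal : ∀ l : List S, l.Chain' E → (∀ x, l.getLast? = some x → term x) →
    ∀ s, l.head? = some s →
    Fflow term rank R Z PB s * pairProd (PFstarFun E s0 term rank R Z PB) l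
      = bTraj R Z PB l := by
  intro l
  induction l with
  | nil => intro _ _ s h; simp at h
  | cons a t ih =>
    intro hc hx s hh
    simp only [List.head?_cons, Option.some.injEq] at hh
    subst hh
    cases t with
    | nil =>
      have hterm_a : term a := hx a (by simp)
      have h1 : pairProd (PFstarFun E s0 term rank R Z PB) [a] = 1 := rfl
      have h2 : pairProd (fun a b => PB b a) [a] = 1 := rfl
      rw [h1, mul_one, F_term hrank hPB hterm hR hZpos hterm_a]
      unfold bTraj
      rw [h2, mul_one]
      simp
    | cons b t' =>
      rw [List.Chain', List.isChain_cons_cons] at hc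
      obtain ⟨x, hlx⟩ : ∃ x, (b :: t').getLast? = some x := by
        cases h : (b :: t').getLast? with
        | none => simp at h
        | some y => exact ⟨y, rfl⟩
      have hlax : (a :: b :: t').getLast? = some x := by
        rw [List.getLast?_cons_cons]; exact hlx
      have htx : term x := hx x hlax
      have hterm_a : ¬ term a := fun h => (hterm a).1 h b hc.1
      have hPF : pairProd (PFstarFun E s0 term rank R Z PB) (a :: b :: t')
          = PFstarFun E s0 term rank R Z PB a b
            * pairProd (PFstarFun E s0 term rank R Z PB) (b :: t') := rfl
      by_cases hF : Fflow term rank R Z PB a = 0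
      · rw [hF, zero_mul]
        have hKxa : Kmat rank PB x a = 0 := by
          have hsum : Fflow term rank R Z PB a = 0 := hF
          unfold Fflow at hsum
          have hnn : ∀ y ∈ univ.filter term, 0 ≤ R y / Z * Kmat rank PB y a :=
            fun y hy => mul_nonneg (div_nonneg (hR y (mem_filter.mp hy).2).le hZpos.le)
              (K_nonneg hrank hPB y a)
          have hz := (Finset.sum_eq_zero_iff_of_nonneg hnn).1 hsum x
            (mem_filter.mpr ⟨mem_univ x, htx⟩)
          rcases mul_eq_zero.mp hz with h | h
          · exact absurd h (div_pos (hR x htx) hZpos).ne'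
          · exact h
        have hw : pairProd (fun a b => PB b a) (a :: b :: t') = 0 := by
          have hle := chain_le_K hrank hPB hterm hR hZpos (a :: b :: t')
            (List.isChain_cons_cons.mpr hc) a x rfl hlax
          rw [hKxa] at hle
          exact le_antisymm hle (pairProd_nonneg (fun c d => hPB.1 d c) _)
        unfold bTraj
        rw [hw, mul_zero]
      · have hPFab : PFstarFun E s0 term rank R Z PB a b
            = PB b a * Fflow term rank R Z PB b / Fflow term rank R Z PB a := by
          simp only [PFstarFun, if_neg hterm_a, if_neg hF]
        have hIH := ih hc.2 (fun y hy => hx y (by rw [List.getLast?_cons_cons]; exact hy))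
          b rfl
        rw [hPF, hPFab, bTraj_cons_cons, ← hIH]
        field_simp

end PFlemmas

def pathsFrom (E : S → S → Prop) (term : S → Prop) : ℕ → S → Finset (List S)
  | 0, s => if term s then {[s]} else ∅
  | n+1, s => (if term s then {[s]} else ∅) ∪
      Finset.univ.biUnion
        (fun s1 => if E s s1 then (pathsFrom E term n s1).image (s :: ·) else ∅)

lemma pathsFrom_spec : ∀ n (s : S) l, l ∈ pathsFrom E term n s →
    l.head? = some s ∧ l.Chain' E ∧ ∃ x, l.getLast? = some x ∧ term x := by
  intro n
  induction n with
  | zero =>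
    intro s l hl
    rw [pathsFrom] at hl
    split at hl
    · rename_i hts
      simp only [Finset.mem_singleton] at hl
      subst hl
      exact ⟨rfl, List.isChain_singleton s, s, rfl, hts⟩
    · simp at hl
  | succ n ih =>
    intro s l hl
    rw [pathsFrom] at hl
    rcases Finset.mem_union.mp hl with h | h
    · split at h
      · rename_i hts
        simp only [Finset.mem_singleton] at h
        subst h
        exact ⟨rfl, List.isChain_singleton s, s, rfl, hts⟩
      · simp at h
    · obtain ⟨s1, -, h⟩ := Finset.mem_biUnion.mp h
      by_cases hE : E s s1
      · rw [if_pos hE] at h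
        obtain ⟨l', hl', rfl⟩ := Finset.mem_image.mp h
        obtain ⟨hh, hcn, x, hgl, htx⟩ := ih s1 l' hl'
        cases l' with
        | nil => simp at hh
        | cons c t =>
          simp only [List.head?_cons, Option.some.injEq] at hh
          subst hh
          refine ⟨rfl, List.isChain_cons_cons.mpr ⟨hE, hcn⟩, x, ?_, htx⟩
          rw [List.getLast?_cons_cons]
          exact hgl
      · rw [if_neg hE] at h
        simp at h

lemma pathsFrom_complete : ∀ n (l : List S) (s : S), l.head? = some s → l.Chain' E →
    (∀ x, l.getLast? = some x → term x) → l.length ≤ n + 1 →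
    l ∈ pathsFrom E term n s := by
  intro n
  induction n with
  | zero =>
    intro l s hh hc hx hlen
    cases l with
    | nil => simp at hh
    | cons a t =>
      simp only [List.head?_cons, Option.some.injEq] at hh
      subst hh
      cases t with
      | nil =>
        have hts : term a := hx a rfl
        rw [pathsFrom, if_pos hts]
        simp
      | cons b t' => simp at hlen
  | succ n ih =>
    intro l s hh hc hx hlen
    cases l with
    | nil => simp at hh
    | cons a t =>
      simp only [List.head?_cons, Option.some.injEq] at hh
      subst hh
      cases t with
      | nil =>
        have hts : term a := hx a rfl
        rw [pathsFrom]
        apply Finset.mem_union_left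
        rw [if_pos hts]
        simp
      | cons b t' =>
        rw [List.Chain', List.isChain_cons_cons] at hc
        rw [pathsFrom]
        apply Finset.mem_union_right
        apply Finset.mem_biUnion.mpr
        refine ⟨b, Finset.mem_univ b, ?_⟩
        rw [if_pos hc.1]
        apply Finset.mem_image.mpr
        refine ⟨b :: t', ih (b :: t') b rfl hc.2 ?_ ?_, rfl⟩
        · intro x hxl
          exact hx x (by rw [List.getLast?_cons_cons]; exact hxl)
        · simp only [List.length_cons] at hlen ⊢
          omega

section SumLemmas
variable (hrank : ∀ s s', E s s' → rank s < rank s')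
  (hterm : ∀ s, term s ↔ ∀ s', ¬ E s s')
  {N : ℕ} (hNmax : ∀ y : S, rank y ≤ N)
include hrank hterm hNmax

lemma term_of_rank_max {s : S} (hs : N ≤ rank s) : term s := by
  by_contra h
  obtain ⟨s', hs'⟩ : ∃ s', E s s' := by
    by_contra h2
    push_neg at h2
    exact h ((hterm s).2 h2)
  have := hrank s s' hs'
  have := hNmax s'
  omega

omit hrank hterm hNmax in
lemma pathsFrom_disj (n : ℕ) (s : S) :
    Set.PairwiseDisjoint (Finset.univ : Finset S)
      (fun s1 => if E s s1 then (pathsFrom E term n s1).image (s :: ·) else ∅) := by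
  intro s1 _ s2 _ hne
  refine Finset.disjoint_left.mpr fun l h1 h2 => ?_
  dsimp only at h1 h2
  by_cases hE1 : E s s1
  · by_cases hE2 : E s s2
    · rw [if_pos hE1] at h1
      rw [if_pos hE2] at h2
      obtain ⟨l1, hl1, he1⟩ := Finset.mem_image.mp h1
      obtain ⟨l2, hl2, he2⟩ := Finset.mem_image.mp h2
      have h12 : l1 = l2 := by
        rw [← he2] at he1
        exact (List.cons.injEq _ _ _ _ ▸ he1).2
      have hh1 := (pathsFrom_spec n s1 l1 hl1).1
      have hh2 := (pathsFrom_spec n s2 l2 hl2).1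
      rw [h12, hh2] at hh1
      exact hne (Option.some.injEq _ _ ▸ hh1).symm
    · rw [if_neg hE2] at h2; simp at h2
  · rw [if_neg hE1] at h1; simp at h1

lemma sum_pairProd_PF {PF : S → S → ℝ} (hPF : IsForwardPolicy E term PF) :
    ∀ n (s : S), N ≤ n + rank s →
      ∑ l ∈ pathsFrom E term n s, pairProd PF l = 1 := by
  intro n
  induction n with
  | zero =>
    intro s hn
    have hts : term s := term_of_rank_max hrank hterm hNmax (by omega)
    rw [pathsFrom, if_pos hts, Finset.sum_singleton]
    rfl
  | succ n ih =>
    intro s hn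
    by_cases hts : term s
    · have hb : (Finset.univ.biUnion
          (fun s1 => if E s s1 then (pathsFrom E term n s1).image (s :: ·) else ∅)) = ∅ := by
        apply Finset.eq_empty_of_forall_notMem
        intro l hl
        obtain ⟨s1, -, h⟩ := Finset.mem_biUnion.mp hl
        rw [if_neg ((hterm s).1 hts s1)] at h
        simp at h
      rw [pathsFrom, if_pos hts, hb, Finset.union_empty, Finset.sum_singleton]
      rfl
    · rw [pathsFrom, if_neg hts, Finset.empty_union,
        Finset.sum_biUnion (pathsFrom_disj n s)]
      have key : ∀ s1 : S,
          (∑ l ∈ (if E s s1 then (pathsFrom E term n s1).image (s :: ·) else ∅),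
            pairProd PF l) = PF s s1 := by
        intro s1
        by_cases hE : E s s1
        · rw [if_pos hE, Finset.sum_image (fun l1 _ l2 _ h => by
            exact (List.cons.injEq _ _ _ _ ▸ h).2)]
          have e : ∀ l' ∈ pathsFrom E term n s1,
              pairProd PF (s :: l') = PF s s1 * pairProd PF l' := by
            intro l' hl'
            exact pairProd_cons (pathsFrom_spec n s1 l' hl').1 s
          rw [Finset.sum_congr rfl e, ← Finset.mul_sum,
            ih s1 (by have := hrank s s1 hE; omega), mul_one]
        · rw [if_neg hE, Finset.sum_empty]
          by_contra h
          exact hE (hPF.2.1 s s1 fun h2 => h (h2 ▸ rfl))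
      rw [Finset.sum_congr rfl (fun s1 _ => key s1)]
      exact hPF.2.2 s hts

variable (hPB : IsBackwardPolicy E s0 PB)
include hPB

lemma sum_pairProd_PB_filter :
    ∀ n (s : S), N ≤ n + rank s → ∀ x, term x →
      ∑ l ∈ (pathsFrom E term n s).filter (fun l => l.getLast? = some x),
        pairProd (fun a b => PB b a) l = Kmat rank PB x s := by
  intro n
  induction n with
  | zero =>
    intro s hn x htx
    have hts : term s := term_of_rank_max hrank hterm hNmax (by omega)
    rw [pathsFrom, if_pos hts, Finset.filter_singleton]
    by_cases hsx : ([s] : List S).getLast? = some x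
    · rw [if_pos hsx, Finset.sum_singleton]
      simp only [List.getLast?_singleton, Option.some.injEq] at hsx
      subst hsx
      exact (K_self hrank hPB s).symm
    · rw [if_neg hsx, Finset.sum_empty]
      simp only [List.getLast?_singleton, Option.some.injEq] at hsx
      exact (K_term hrank hPB hterm hts x (fun h => hsx h.symm)).symm
  | succ n ih =>
    intro s hn x htx
    by_cases hts : term s
    · have hb : (Finset.univ.biUnion
          (fun s1 => if E s s1 then (pathsFrom E term n s1).image (s :: ·) else ∅)) = ∅ := by
        apply Finset.eq_empty_of_forall_notMem
        intro l hl
        obtain ⟨s1, -, h⟩ := Finset.mem_biUnion.mp hl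
        rw [if_neg ((hterm s).1 hts s1)] at h
        simp at h
      rw [pathsFrom, if_pos hts, hb, Finset.union_empty, Finset.filter_singleton]
      by_cases hsx : ([s] : List S).getLast? = some x
      · rw [if_pos hsx, Finset.sum_singleton]
        simp only [List.getLast?_singleton, Option.some.injEq] at hsx
        subst hsx
        exact (K_self hrank hPB s).symm
      · rw [if_neg hsx, Finset.sum_empty]
        simp only [List.getLast?_singleton, Option.some.injEq] at hsx
        exact (K_term hrank hPB hterm hts x (fun h => hsx h.symm)).symm
    · have hxs : x ≠ s := fun h => hts (h ▸ htx)
      rw [pathsFrom, if_neg hts, Finset.empty_union, Finset.sum_filter,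
        Finset.sum_biUnion (pathsFrom_disj n s)]
      have key : ∀ s1 : S,
          (∑ l ∈ (if E s s1 then (pathsFrom E term n s1).image (s :: ·) else ∅),
            if l.getLast? = some x then pairProd (fun a b => PB b a) l else 0)
          = PB s1 s * Kmat rank PB x s1 := by
        intro s1
        by_cases hE : E s s1
        · rw [if_pos hE, Finset.sum_image (fun l1 _ l2 _ h => by
            exact (List.cons.injEq _ _ _ _ ▸ h).2)]
          have e : ∀ l' ∈ pathsFrom E term n s1,
              (if (s :: l').getLast? = some x then pairProd (fun a b => PB b a) (s :: l') else 0)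
              = PB s1 s * (if l'.getLast? = some x then pairProd (fun a b => PB b a) l' else 0) := by
            intro l' hl'
            have hh' := (pathsFrom_spec n s1 l' hl').1
            have hgl : (s :: l').getLast? = l'.getLast? := by
              cases l' with
              | nil => simp at hh'
              | cons c t => rw [List.getLast?_cons_cons]
            rw [hgl, pairProd_cons hh' s, mul_ite, mul_zero]
          rw [Finset.sum_congr rfl e, ← Finset.mul_sum, ← Finset.sum_filter,
            ih s1 (by have := hrank s s1 hE; omega) x htx]
        · rw [if_neg hE, Finset.sum_empty]
          have hPB0 : PB s1 s = 0 := by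
            by_contra h
            exact hE (hPB.2.1 s1 s h)
          rw [hPB0, zero_mul]
      rw [Finset.sum_congr rfl (fun s1 _ => key s1)]
      exact (K_decomp hrank hPB hterm x s hts hxs).symm

end SumLemmas


lemma limit_exists (PBseq : ℕ → S → S → ℝ)
    (hstable : ∀ ε > (0:ℝ), ∃ T0 : ℕ, ∀ Tn ≥ T0, ∀ t : ℕ,
      ∑ s' : S, ∑ s : S, |PBseq Tn s' s - PBseq (Tn + t) s' s| ≤ ε) (a b : S) :
    ∃ L : ℝ, Filter.Tendsto (fun t => PBseq t a b) Filter.atTop (nhds L) := by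
  apply cauchySeq_tendsto_of_complete
  rw [Metric.cauchySeq_iff]
  intro ε hε
  obtain ⟨T0, hT0⟩ := hstable (ε/2) (by linarith)
  refine ⟨T0, fun m hm n hn => ?_⟩
  have key : ∀ m n : ℕ, T0 ≤ m → m ≤ n → |PBseq m a b - PBseq n a b| ≤ ε/2 := by
    intro m n hm hmn
    have h := hT0 m hm (n - m)
    rw [Nat.add_sub_cancel' hmn] at h
    have h1 : |PBseq m a b - PBseq n a b| ≤ ∑ s : S, |PBseq m a s - PBseq n a s| :=
      Finset.single_le_sum (f := fun s => |PBseq m a s - PBseq n a s|)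
        (fun s _ => abs_nonneg _) (mem_univ b)
    have h2 : ∑ s : S, |PBseq m a s - PBseq n a s|
        ≤ ∑ s' : S, ∑ s : S, |PBseq m s' s - PBseq n s' s| :=
      Finset.single_le_sum (f := fun s' => ∑ s : S, |PBseq m s' s - PBseq n s' s|)
        (fun s' _ => Finset.sum_nonneg fun s _ => abs_nonneg _) (mem_univ a)
    linarith
  rw [Real.dist_eq]
  rcases le_total m n with h|h
  · have := key m n hm h
    linarith
  · have := key n m hn h
    rw [abs_sub_comm]
    linarith

lemma pairProd_tendsto (PBseq : ℕ → S → S → ℝ) (PBstar : S → S → ℝ)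
    (hlim : ∀ a b, Filter.Tendsto (fun t => PBseq t a b) Filter.atTop (nhds (PBstar a b))) :
    ∀ l : List S, Filter.Tendsto (fun t => pairProd (fun a b => PBseq t b a) l) Filter.atTop
      (nhds (pairProd (fun a b => PBstar b a) l))
  | [] => by simpa [pairProd] using tendsto_const_nhds
  | [a] => by simpa [pairProd] using tendsto_const_nhds
  | a :: b :: l => by
      have h1 := (hlim b a).mul (pairProd_tendsto PBseq PBstar hlim (b :: l))
      exact h1



lemma log_ge_one_sub_inv {t : ℝ} (ht : 0 < t) : 1 - 1/t ≤ Real.log t := by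
  have h := Real.log_le_sub_one_of_pos (inv_pos.mpr ht)
  rw [Real.log_inv] at h
  rw [one_div]
  linarith

lemma psi_deriv {t : ℝ} (ht : 0 < t) :
    HasDerivAt (fun u : ℝ => (u+1)*Real.log u - 2*(u-1))
      (1 * Real.log t + (t+1) * t⁻¹ - 2) t := by
  have h1 : HasDerivAt (fun u : ℝ => (u+1)*Real.log u)
      (1 * Real.log t + (t+1) * t⁻¹) t :=
    HasDerivAt.mul ((hasDerivAt_id t).add_const 1) (Real.hasDerivAt_log ht.ne')
  have h2 : HasDerivAt (fun u : ℝ => 2*(u-1)) 2 t := by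
    simpa using ((hasDerivAt_id t).sub_const 1).const_mul 2
  exact h1.sub h2

lemma psi_deriv_nonneg {x : ℝ} (hx : 0 < x) :
    0 ≤ 1 * Real.log x + (x+1) * x⁻¹ - 2 := by
  have hlog := log_ge_one_sub_inv hx
  have he : (x+1) * x⁻¹ = 1 + 1/x := by field_simp
  rw [he, one_mul]
  have h1x : (1:ℝ)/x = 1/x := rfl
  linarith

lemma psi_nonneg {t : ℝ} (ht : 1 ≤ t) : 0 ≤ (t+1)*Real.log t - 2*(t-1) := by
  rcases eq_or_lt_of_le ht with h|h
  · rw [← h]; simp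
  · have hmono : MonotoneOn (fun u : ℝ => (u+1)*Real.log u - 2*(u-1)) (Set.Icc 1 t) := by
      apply monotoneOn_of_deriv_nonneg (convex_Icc 1 t)
      · intro x hx
        exact (psi_deriv (by have := hx.1; linarith)).differentiableAt.continuousAt.continuousWithinAt
      · intro x hx
        rw [interior_Icc] at hx
        exact (psi_deriv (by have := hx.1; linarith)).differentiableAt.differentiableWithinAt
      · intro x hx
        rw [interior_Icc] at hx
        have hx0 : (0:ℝ) < x := by have := hx.1; linarith
        rw [(psi_deriv hx0).deriv]
        exact psi_deriv_nonneg hx0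
    have h0 := hmono (Set.left_mem_Icc.mpr ht) (Set.right_mem_Icc.mpr ht) ht
    simpa using h0

lemma psi_nonpos {t : ℝ} (ht0 : 0 < t) (ht : t ≤ 1) : (t+1)*Real.log t - 2*(t-1) ≤ 0 := by
  rcases eq_or_lt_of_le ht with h|h
  · rw [h]; simp
  · have hmono : MonotoneOn (fun u : ℝ => (u+1)*Real.log u - 2*(u-1)) (Set.Icc t 1) := by
      apply monotoneOn_of_deriv_nonneg (convex_Icc t 1)
      · intro x hx
        exact (psi_deriv (by have := hx.1; linarith)).differentiableAt.continuousAt.continuousWithinAt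
      · intro x hx
        rw [interior_Icc] at hx
        exact (psi_deriv (by have := hx.1; linarith)).differentiableAt.differentiableWithinAt
      · intro x hx
        rw [interior_Icc] at hx
        have hx0 : (0:ℝ) < x := by have := hx.1; linarith
        rw [(psi_deriv hx0).deriv]
        exact psi_deriv_nonneg hx0
    have h0 := hmono (Set.left_mem_Icc.mpr ht) (Set.right_mem_Icc.mpr ht) ht
    simpa using h0

lemma H_deriv {x : ℝ} (hx : 0 < x) :
    HasDerivAt (fun u : ℝ => (u*Real.log u - u + 1)*(2*u+4) - 3*(u-1)^2)
      (4*((x+1)*Real.log x - 2*(x-1))) x := by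
  have h1 : HasDerivAt (fun u : ℝ => u*Real.log u) (Real.log x + 1) x :=
    Real.hasDerivAt_mul_log hx.ne'
  have h2 : HasDerivAt (fun u : ℝ => u*Real.log u - u + 1) (Real.log x + 1 - 1) x :=
    (h1.sub (hasDerivAt_id x)).add_const 1
  have h3 : HasDerivAt (fun u : ℝ => 2*u+4) 2 x := by
    simpa using ((hasDerivAt_id x).const_mul 2).add_const 4
  have h4 := h2.mul h3
  have h5 : HasDerivAt (fun u : ℝ => 3*(u-1)^2) (3*((2:ℕ)*(x-1)^(2-1)*1)) x :=
    (((hasDerivAt_id' x).sub_const 1).pow 2).const_mul 3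
  exact (h4.sub h5).congr_deriv (by push_cast; ring)

lemma core_ineq {t : ℝ} (ht : 0 < t) :
    3*(t-1)^2 ≤ (t*Real.log t - t + 1)*(2*t+4) := by
  have hH1 : ((1:ℝ)*Real.log 1 - 1 + 1)*(2*1+4) - 3*((1:ℝ)-1)^2 = 0 := by
    simp
  rcases le_or_gt 1 t with h1|h1
  · have hmono : MonotoneOn (fun u : ℝ => (u*Real.log u - u + 1)*(2*u+4) - 3*(u-1)^2)
        (Set.Icc 1 t) := by
      apply monotoneOn_of_deriv_nonneg (convex_Icc 1 t)
      · intro x hx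
        exact (H_deriv (by have := hx.1; linarith)).differentiableAt.continuousAt.continuousWithinAt
      · intro x hx
        rw [interior_Icc] at hx
        exact (H_deriv (by have := hx.1; linarith)).differentiableAt.differentiableWithinAt
      · intro x hx
        rw [interior_Icc] at hx
        rw [(H_deriv (by have := hx.1; linarith)).deriv]
        have := psi_nonneg (le_of_lt hx.1)
        linarith
    have h0 := hmono (Set.left_mem_Icc.mpr h1) (Set.right_mem_Icc.mpr h1) h1
    norm_num [Real.log_one] at h0
    linarith
  · have hanti : AntitoneOn (fun u : ℝ => (u*Real.log u - u + 1)*(2*u+4) - 3*(u-1)^2)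
        (Set.Icc t 1) := by
      apply antitoneOn_of_deriv_nonpos (convex_Icc t 1)
      · intro x hx
        exact (H_deriv (by have := hx.1; linarith)).differentiableAt.continuousAt.continuousWithinAt
      · intro x hx
        rw [interior_Icc] at hx
        exact (H_deriv (by have := hx.1; linarith)).differentiableAt.differentiableWithinAt
      · intro x hx
        rw [interior_Icc] at hx
        rw [(H_deriv (by have := hx.1; linarith)).deriv]
        have := psi_nonpos (by linarith [hx.1] : (0:ℝ) < x) (le_of_lt hx.2)
        linarith
    have h0 := hanti (Set.left_mem_Icc.mpr h1.le) (Set.right_mem_Icc.mpr h1.le) h1.le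
    norm_num [Real.log_one] at h0
    linarith

lemma pointwise_kl {a b : ℝ} (ha : 0 ≤ a) (hb : 0 ≤ b) (hab : b = 0 → a = 0) :
    (a-b)^2 / ((2*a+4*b)/3) ≤ a * Real.log (a/b) - a + b := by
  rcases eq_or_lt_of_le hb with hb0|hb0
  · have ha0 := hab hb0.symm
    rw [ha0, ← hb0]
    norm_num
  · rcases eq_or_lt_of_le ha with ha0|ha0
    · rw [← ha0]
      have he : ((0:ℝ)-b)^2 / ((2*0+4*b)/3) = 3*b/4 := by
        field_simp
        ring
      rw [he]
      norm_num
      linarith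

    · have ht := core_ineq (div_pos ha0 hb0)
      have key : 3*(a-b)^2 ≤ (a*Real.log (a/b) - a + b) * (2*a+4*b) := by
        have hmul := mul_le_mul_of_nonneg_left ht (sq_nonneg b)
        have e1 : b^2 * (3*(a/b-1)^2) = 3*(a-b)^2 := by
          field_simp
        have e2 : b^2 * (((a/b)*Real.log (a/b) - a/b + 1)*(2*(a/b)+4))
            = (a*Real.log (a/b) - a + b) * (2*a+4*b) := by
          field_simp
        rw [e1, e2] at hmul
        exact hmul
      have hw : (0:ℝ) < (2*a+4*b)/3 := by positivity
      rw [div_le_iff₀ hw]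
      have he : (a*Real.log (a/b) - a + b) * ((2*a+4*b)/3)
          = ((a*Real.log (a/b) - a + b) * (2*a+4*b))/3 := by ring
      rw [he]
      linarith

lemma pinsker {α : Type*} (A : Finset α) (p q : α → ℝ)
    (hp : ∀ a ∈ A, 0 ≤ p a) (hq : ∀ a ∈ A, 0 ≤ q a)
    (hp1 : ∑ a ∈ A, p a = 1) (hq1 : ∑ a ∈ A, q a = 1)
    (habs : ∀ a ∈ A, q a = 0 → p a = 0) :
    (∑ a ∈ A, |p a - q a|)^2 ≤ 2 * ∑ a ∈ A, p a * Real.log (p a / q a)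
    ∧ 0 ≤ ∑ a ∈ A, p a * Real.log (p a / q a) := by
  set w : α → ℝ := fun a => (2*p a + 4*q a)/3 with hw
  have hwnn : ∀ a ∈ A, 0 ≤ w a := fun a ha => by
    have := hp a ha; have := hq a ha; positivity
  have hDge : ∀ a ∈ A, (p a - q a)^2 / w a ≤ p a * Real.log (p a / q a) - p a + q a :=
    fun a ha => pointwise_kl (hp a ha) (hq a ha) (habs a ha)
  have hsumD : ∑ a ∈ A, (p a * Real.log (p a / q a) - p a + q a)
      = ∑ a ∈ A, p a * Real.log (p a / q a) := by
    rw [Finset.sum_add_distrib, Finset.sum_sub_distrib, hp1, hq1]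
    ring
  have hD2 : ∑ a ∈ A, (p a - q a)^2 / w a ≤ ∑ a ∈ A, p a * Real.log (p a / q a) := by
    rw [← hsumD]
    exact Finset.sum_le_sum hDge
  have hCS : (∑ a ∈ A, |p a - q a|)^2
      ≤ (∑ a ∈ A, (p a - q a)^2 / w a) * (∑ a ∈ A, w a) := by
    apply Finset.sum_sq_le_sum_mul_sum_of_sq_eq_mul A
    · exact fun a ha => div_nonneg (sq_nonneg _) (hwnn a ha)
    · exact hwnn
    · intro a ha
      rcases eq_or_lt_of_le (hwnn a ha) with h0|h0
      · have hpq : p a = 0 ∧ q a = 0 := by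
          have h1 := hp a ha; have h2 := hq a ha
          constructor <;> (simp only [hw] at h0; nlinarith)
        rw [sq_abs, hpq.1, hpq.2]
        norm_num
      · rw [sq_abs, div_mul_cancel₀ _ h0.ne']
  have hsumw : ∑ a ∈ A, w a = 2 := by
    have he : ∑ a ∈ A, w a = (2*(∑ a ∈ A, p a) + 4*(∑ a ∈ A, q a))/3 := by
      rw [← Finset.sum_div, Finset.sum_add_distrib, ← Finset.mul_sum, ← Finset.mul_sum]
    rw [he, hp1, hq1]
    norm_num
  have hDnn : 0 ≤ ∑ a ∈ A, (p a - q a)^2 / w a :=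
    Finset.sum_nonneg fun a ha => div_nonneg (sq_nonneg _) (hwnn a ha)
  constructor
  · calc (∑ a ∈ A, |p a - q a|)^2
        ≤ (∑ a ∈ A, (p a - q a)^2 / w a) * (∑ a ∈ A, w a) := hCS
      _ = 2 * (∑ a ∈ A, (p a - q a)^2 / w a) := by rw [hsumw]; ring
      _ ≤ 2 * ∑ a ∈ A, p a * Real.log (p a / q a) := by linarith
  · linarith


end TLMProof

/-- Convergence of trajectory likelihood maximization: if the backward policy
sequence is stable (uniformly Cauchy in L1) and the average regret
`(1/T) Σ_{t<T} KL(P^{PF_t} ‖ P^{PB_t})` tends to `0`, then there is a proper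
GFlowNet forward policy `PF*` (satisfying trajectory balance, hence inducing the
marginal `R(x)/Z`) such that the Cesàro averages of the forward trajectory
distributions converge to `P^{PF*}` in L1. -/
theorem tlm_convergence
    {S : Type*} [Fintype S] [DecidableEq S]
    (E : S → S → Prop) (s0 : S) (term : S → Prop)
    (hterm : ∀ s, term s ↔ ∀ s', ¬ E s s')
    (hinit : ∀ s, ¬ E s s0)
    (hreach : ∀ s, Relation.ReflTransGen E s0 s)
    (rank : S → ℕ) (hrank : ∀ s s', E s s' → rank s < rank s')
    (T : Finset (List S))
    (hT : ∀ l, l ∈ T ↔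
      (l.head? = some s0 ∧ l.Chain' E ∧ ∃ x, l.getLast? = some x ∧ term x))
    (R : S → ℝ) (hR : ∀ x, term x → 0 < R x)
    (Z : ℝ) (hZ : Z = ∑ x ∈ Finset.univ.filter term, R x) (hZpos : 0 < Z)
    (PFseq PBseq : ℕ → S → S → ℝ)
    (hPF : ∀ t, IsForwardPolicy E term (PFseq t))
    (hPB : ∀ t, IsBackwardPolicy E s0 (PBseq t))
    -- (1) stability of backward updates: sup_{t ≥ 0} ‖PB^T − PB^{T+t}‖₁ → 0
    (hstable : ∀ ε > (0 : ℝ), ∃ T0 : ℕ, ∀ Tn ≥ T0, ∀ t : ℕ,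
      ∑ s' : S, ∑ s : S, |PBseq Tn s' s - PBseq (Tn + t) s' s| ≤ ε)
    -- (2) the average regret tends to 0
    (hregret : Filter.Tendsto
      (fun Tn : ℕ =>
        (∑ t ∈ Finset.range Tn,
          klDivFin T (fun l => pairProd (PFseq t) l)
            (fun l => bTraj R Z (PBseq t) l)) / (Tn : ℝ≥0∞))
      Filter.atTop (nhds 0)) :
    ∃ PFstar : S → S → ℝ, IsForwardPolicy E term PFstar ∧
      -- PF* satisfies trajectory balance with some backward policy ...
      (∃ PBstar : S → S → ℝ, IsBackwardPolicy E s0 PBstar ∧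
        ∀ l ∈ T, pairProd PFstar l = bTraj R Z PBstar l) ∧
      -- ... hence induces the marginal R(x)/Z over terminal states ...
      (∀ x, term x →
        ∑ l ∈ T.filter (fun l => l.getLast? = some x), pairProd PFstar l = R x / Z) ∧
      -- ... and the Cesàro averages of the forward trajectory distributions
      -- converge to P^{PF*} in L1
      Filter.Tendsto
        (fun Tn : ℕ => ∑ l ∈ T,
          |(∑ t ∈ Finset.range Tn, pairProd (PFseq t) l) / (Tn : ℝ) - pairProd PFstar l|)
        Filter.atTop (nhds 0) := by
  classical
  set N : ℕ := (Finset.univ : Finset S).sup rank with hNdef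
  have hNmax : ∀ y : S, rank y ≤ N := fun y => Finset.le_sup (Finset.mem_univ y)
  have hlimex : ∀ a b : S, ∃ L : ℝ,
      Filter.Tendsto (fun t => PBseq t a b) Filter.atTop (nhds L) :=
    TLMProof.limit_exists PBseq hstable
  set PBstar : S → S → ℝ := fun a b => (hlimex a b).choose with hPBdef
  have hlim : ∀ a b, Filter.Tendsto (fun t => PBseq t a b) Filter.atTop (nhds (PBstar a b)) :=
    fun a b => (hlimex a b).choose_spec
  have hPBs : IsBackwardPolicy E s0 PBstar := by
    refine ⟨fun a b => ge_of_tendsto' (hlim a b) (fun t => (hPB t).1 a b), ?_, ?_⟩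
    · intro a b hne
      by_contra hE
      apply hne
      have h0 : ∀ t, PBseq t a b = 0 := fun t => by
        by_contra h
        exact hE ((hPB t).2.1 a b h)
      exact tendsto_nhds_unique (hlim a b)
        ((Filter.tendsto_congr h0).mpr tendsto_const_nhds)
    · intro s' hs'
      refine tendsto_nhds_unique (tendsto_finset_sum _ (fun s _ => hlim s' s)) ?_
      exact (Filter.tendsto_congr (fun t => (hPB t).2.2 s' hs')).mpr tendsto_const_nhds
  set PFstar : S → S → ℝ := TLMProof.PFstarFun E s0 term rank R Z PBstar with hPFdef
  have hfwd : IsForwardPolicy E term PFstar :=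
    TLMProof.PFstar_forward hrank hPBs hterm hR hZpos
  have hTeq : T = TLMProof.pathsFrom E term N s0 := by
    ext l
    constructor
    · intro hl
      obtain ⟨hh, hcn, x, hgl, htx⟩ := (hT l).1 hl
      refine TLMProof.pathsFrom_complete N l s0 hh hcn ?_ ?_
      · intro y hy
        rw [hgl] at hy
        cases hy
        exact htx
      · have h1 := TLMProof.chain_rank hrank hPBs hterm hR hZpos l hcn s0 x hh hgl
        have h2 := hNmax x
        omega
    · intro hl
      obtain ⟨hh, hcn, x, hgl, htx⟩ := TLMProof.pathsFrom_spec N s0 l hl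
      exact (hT l).2 ⟨hh, hcn, x, hgl, htx⟩
  have hbal : ∀ l ∈ T, pairProd PFstar l = bTraj R Z PBstar l := by
    intro l hl
    obtain ⟨hh, hcn, x, hgl, htx⟩ := (hT l).1 hl
    have h := TLMProof.bal hrank hPBs hterm hR hZpos l hcn
      (fun y hy => by rw [hgl] at hy; cases hy; exact htx) s0 hh
    rwa [TLMProof.F_s0 hrank hPBs hterm hR hZpos hZ, one_mul] at h
  have hmargPB : ∀ (PB' : S → S → ℝ), IsBackwardPolicy E s0 PB' → ∀ x, term x →
      ∑ l ∈ T.filter (fun l => l.getLast? = some x), bTraj R Z PB' l = R x / Z := by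
    intro PB' hPB' x htx
    have e1 : ∀ l ∈ T.filter (fun l => l.getLast? = some x),
        bTraj R Z PB' l = (R x / Z) * pairProd (fun a b => PB' b a) l := by
      intro l hl
      have hgl := (Finset.mem_filter.mp hl).2
      simp only [bTraj, hgl, Option.map_some, Option.getD_some]
    rw [Finset.sum_congr rfl e1, ← Finset.mul_sum, hTeq,
      TLMProof.sum_pairProd_PB_filter hrank hterm hNmax hPB' N s0
        (Nat.le_add_right N (rank s0)) x htx,
      TLMProof.K_s0 hrank hPB' x, mul_one]
  have hpart : ∀ g : List S → ℝ, ∑ l ∈ T, g l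
      = ∑ x ∈ Finset.univ.filter term,
          ∑ l ∈ T.filter (fun l => l.getLast? = some x), g l := by
    intro g
    have hmap : ∀ l ∈ T, (l.getLast?).getD s0 ∈ Finset.univ.filter term := by
      intro l hl
      obtain ⟨hh, hcn, y, hgl, hty⟩ := (hT l).1 hl
      rw [hgl]
      simpa using hty
    rw [← Finset.sum_fiberwise_of_maps_to hmap g]
    refine Finset.sum_congr rfl fun x hx => ?_
    refine Finset.sum_congr ?_ (fun _ _ => rfl)
    apply Finset.filter_congr
    intro l hl
    obtain ⟨hh, hcn, y, hgl, hty⟩ := (hT l).1 hl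
    rw [hgl]
    simp
  have hp1 : ∀ t, ∑ l ∈ T, pairProd (PFseq t) l = 1 := by
    intro t
    rw [hTeq]
    exact TLMProof.sum_pairProd_PF hrank hterm hNmax (hPF t) N s0
      (Nat.le_add_right N (rank s0))
  have hq1 : ∀ (PB' : S → S → ℝ), IsBackwardPolicy E s0 PB' →
      ∑ l ∈ T, bTraj R Z PB' l = 1 := by
    intro PB' hPB'
    rw [hpart (bTraj R Z PB')]
    have e : ∀ x ∈ Finset.univ.filter term,
        ∑ l ∈ T.filter (fun l => l.getLast? = some x), bTraj R Z PB' l = R x / Z :=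
      fun x hx => hmargPB PB' hPB' x (Finset.mem_filter.mp hx).2
    rw [Finset.sum_congr rfl e, ← Finset.sum_div, ← hZ, div_self hZpos.ne']
  have hqnn : ∀ (PB' : S → S → ℝ), IsBackwardPolicy E s0 PB' →
      ∀ l ∈ T, 0 ≤ bTraj R Z PB' l := by
    intro PB' hPB' l hl
    obtain ⟨hh, hcn, x, hgl, htx⟩ := (hT l).1 hl
    simp only [bTraj, hgl, Option.map_some, Option.getD_some]
    exact mul_nonneg (div_nonneg (hR x htx).le hZpos.le)
      (TLMProof.pairProd_nonneg (fun a b => hPB'.1 b a) l)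
  have hpnn : ∀ t : ℕ, ∀ l ∈ T, 0 ≤ pairProd (PFseq t) l :=
    fun t l _ => TLMProof.pairProd_nonneg (fun a b => (hPF t).1 a b) l
  have hklne : ∀ t0, klDivFin T (fun l => pairProd (PFseq t0) l)
      (fun l => bTraj R Z (PBseq t0) l) ≠ ⊤ := by
    intro t0 htop
    have hev := hregret.eventually_lt_const (show (0:ℝ≥0∞) < 1 by norm_num)
    obtain ⟨n0, hn0⟩ := Filter.eventually_atTop.mp hev
    have h1 := hn0 (max n0 (t0+1)) (le_max_left _ _)
    have hsum : (∑ t ∈ Finset.range (max n0 (t0+1)), klDivFin T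
        (fun l => pairProd (PFseq t) l) (fun l => bTraj R Z (PBseq t) l)) = ⊤ :=
      ENNReal.sum_eq_top.mpr ⟨t0, Finset.mem_range.mpr
        (lt_of_lt_of_le (Nat.lt_succ_self t0) (le_max_right _ _)), htop⟩
    rw [hsum, ENNReal.top_div_of_ne_top (ENNReal.natCast_ne_top _)] at h1
    exact not_top_lt h1
  have habs : ∀ t : ℕ, ∀ l ∈ T, bTraj R Z (PBseq t) l = 0 → pairProd (PFseq t) l = 0 := by
    intro t
    have h := hklne t
    rw [klDivFin] at h
    split at h
    · assumption
    · exact absurd rfl h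
  set k : ℕ → ℝ := fun t => ∑ l ∈ T, pairProd (PFseq t) l
      * Real.log (pairProd (PFseq t) l / bTraj R Z (PBseq t) l) with hkdef
  have hkl_eq : ∀ t, klDivFin T (fun l => pairProd (PFseq t) l)
      (fun l => bTraj R Z (PBseq t) l) = ENNReal.ofReal (k t) := by
    intro t
    rw [klDivFin, if_pos (habs t)]
  have hpins : ∀ t,
      (∑ l ∈ T, |pairProd (PFseq t) l - bTraj R Z (PBseq t) l|)^2 ≤ 2 * k t ∧ 0 ≤ k t :=
    fun t => TLMProof.pinsker T _ _ (hpnn t) (hqnn (PBseq t) (hPB t)) (hp1 t)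
      (hq1 (PBseq t) (hPB t)) (habs t)
  set b : ℕ → ℝ := fun t => ∑ l ∈ T, |pairProd (PFseq t) l - bTraj R Z (PBseq t) l|
    with hbdef
  have hbnn : ∀ t, 0 ≤ b t := fun t => Finset.sum_nonneg fun l _ => abs_nonneg _
  have hknn : ∀ t, 0 ≤ k t := fun t => (hpins t).2
  have hfun : ∀ n : ℕ, (∑ t ∈ Finset.range n, klDivFin T (fun l => pairProd (PFseq t) l)
        (fun l => bTraj R Z (PBseq t) l)) / (n:ℝ≥0∞)
      = ENNReal.ofReal ((∑ t ∈ Finset.range n, k t)/(n:ℝ)) := by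
    intro n
    rcases Nat.eq_zero_or_pos n with rfl|hn
    · simp
    · rw [Finset.sum_congr rfl (fun t _ => hkl_eq t),
        ← ENNReal.ofReal_sum_of_nonneg (fun t _ => hknn t),
        ENNReal.ofReal_div_of_pos (by exact_mod_cast hn : (0:ℝ) < (n:ℝ)),
        ENNReal.ofReal_natCast]
  have hreg2 : Filter.Tendsto
      (fun n : ℕ => ENNReal.ofReal ((∑ t ∈ Finset.range n, k t)/(n:ℝ)))
      Filter.atTop (nhds 0) := (Filter.tendsto_congr hfun).mp hregret
  have hgnn : ∀ n : ℕ, 0 ≤ (∑ t ∈ Finset.range n, k t)/(n:ℝ) :=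
    fun n => div_nonneg (Finset.sum_nonneg fun t _ => hknn t) (Nat.cast_nonneg n)
  have hreg3 : Filter.Tendsto (fun n : ℕ => (∑ t ∈ Finset.range n, k t)/(n:ℝ))
      Filter.atTop (nhds 0) := by
    have h1 := (ENNReal.tendsto_toReal (by norm_num : (0:ℝ≥0∞) ≠ ⊤)).comp hreg2
    have h2 := h1.congr (fun n => ENNReal.toReal_ofReal (hgnn n))
    simpa using h2
  have hA2 : ∀ n : ℕ, ((∑ t ∈ Finset.range n, b t)/(n:ℝ))^2
      ≤ 2 * ((∑ t ∈ Finset.range n, k t)/(n:ℝ)) := by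
    intro n
    rcases Nat.eq_zero_or_pos n with rfl|hn
    · simp
    · have hnR : (0:ℝ) < (n:ℝ) := by exact_mod_cast hn
      have hCS := Finset.sum_mul_sq_le_sq_mul_sq (Finset.range n) (fun _ => (1:ℝ)) b
      simp only [one_pow, one_mul, Finset.sum_const, Finset.card_range,
        nsmul_eq_mul, mul_one] at hCS
      have hbk : ∑ t ∈ Finset.range n, (b t)^2 ≤ ∑ t ∈ Finset.range n, 2 * k t :=
        Finset.sum_le_sum fun t _ => (hpins t).1
      rw [← Finset.mul_sum] at hbk
      have h3 : (∑ t ∈ Finset.range n, b t)^2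
          ≤ (n:ℝ) * (2 * ∑ t ∈ Finset.range n, k t) := by
        nlinarith [hCS, hbk, hnR.le]
      rw [div_pow, div_le_iff₀ (by positivity : (0:ℝ) < (n:ℝ)^2)]
      have e : 2 * ((∑ t ∈ Finset.range n, k t)/(n:ℝ)) * (n:ℝ)^2
          = (n:ℝ) * (2 * ∑ t ∈ Finset.range n, k t) := by
        field_simp
      rw [e]
      exact h3
  have hAnn : ∀ n:ℕ, 0 ≤ (∑ t ∈ Finset.range n, b t)/(n:ℝ) :=
    fun n => div_nonneg (Finset.sum_nonneg fun t _ => hbnn t) (Nat.cast_nonneg n)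
  have hAsq : Filter.Tendsto (fun n : ℕ => ((∑ t ∈ Finset.range n, b t)/(n:ℝ))^2)
      Filter.atTop (nhds 0) := by
    have h2 : Filter.Tendsto (fun n : ℕ => 2 * ((∑ t ∈ Finset.range n, k t)/(n:ℝ)))
        Filter.atTop (nhds 0) := by
      simpa using hreg3.const_mul 2
    exact squeeze_zero (fun n => sq_nonneg _) hA2 h2
  have hA0 : Filter.Tendsto (fun n : ℕ => (∑ t ∈ Finset.range n, b t)/(n:ℝ))
      Filter.atTop (nhds 0) := by
    have h1 := (Real.continuous_sqrt.tendsto 0).comp hAsq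
    have h2 := h1.congr (fun n => Real.sqrt_sq (hAnn n))
    simpa using h2
  set c : ℕ → ℝ := fun t => ∑ l ∈ T, |bTraj R Z (PBseq t) l - bTraj R Z PBstar l|
    with hcdef
  have hc0 : Filter.Tendsto c Filter.atTop (nhds 0) := by
    have h1 : ∀ l : List S, Filter.Tendsto (fun t => bTraj R Z (PBseq t) l)
        Filter.atTop (nhds (bTraj R Z PBstar l)) := by
      intro l
      simp only [bTraj]
      exact tendsto_const_nhds.mul (TLMProof.pairProd_tendsto PBseq PBstar hlim l)
    have h2 := tendsto_finset_sum T
      (fun l (_ : l ∈ T) =>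
        ((h1 l).sub (tendsto_const_nhds (x := bTraj R Z PBstar l))).abs)
    simpa using h2
  have hC0 : Filter.Tendsto (fun n:ℕ => (∑ t ∈ Finset.range n, c t)/(n:ℝ))
      Filter.atTop (nhds 0) := by
    have h1 := hc0.cesaro
    exact h1.congr (fun n => by rw [div_eq_mul_inv, mul_comm])
  refine ⟨PFstar, hfwd, ⟨PBstar, hPBs, hbal⟩, ?_, ?_⟩
  · intro x htx
    rw [Finset.sum_congr rfl (fun l hl => hbal l (Finset.mem_filter.mp hl).1)]
    exact hmargPB PBstar hPBs x htx
  · have hGle : ∀ᶠ n in Filter.atTop,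
        (∑ l ∈ T, |(∑ t ∈ Finset.range n, pairProd (PFseq t) l) / (n:ℝ)
          - pairProd PFstar l|)
        ≤ (∑ t ∈ Finset.range n, b t)/(n:ℝ) + (∑ t ∈ Finset.range n, c t)/(n:ℝ) := by
      rw [Filter.eventually_atTop]
      refine ⟨1, fun n hn => ?_⟩
      have hnR : (0:ℝ) < (n:ℝ) := by exact_mod_cast hn
      have step1 : ∀ l ∈ T,
          |(∑ t ∈ Finset.range n, pairProd (PFseq t) l) / (n:ℝ) - pairProd PFstar l|
          ≤ (∑ t ∈ Finset.range n,
              |pairProd (PFseq t) l - bTraj R Z PBstar l|)/(n:ℝ) := by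
        intro l hl
        have e1 : (∑ t ∈ Finset.range n, pairProd (PFseq t) l) / (n:ℝ)
            - pairProd PFstar l
            = (∑ t ∈ Finset.range n,
                (pairProd (PFseq t) l - bTraj R Z PBstar l))/(n:ℝ) := by
          rw [hbal l hl, Finset.sum_sub_distrib, Finset.sum_const, Finset.card_range,
            nsmul_eq_mul, sub_div, mul_div_cancel_left₀ _ hnR.ne']
        rw [e1, abs_div, abs_of_pos hnR]
        exact (div_le_div_iff_of_pos_right hnR).mpr (Finset.abs_sum_le_sum_abs _ _)
      calc (∑ l ∈ T, |(∑ t ∈ Finset.range n, pairProd (PFseq t) l) / (n:ℝ)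
              - pairProd PFstar l|)
          ≤ ∑ l ∈ T, (∑ t ∈ Finset.range n,
              |pairProd (PFseq t) l - bTraj R Z PBstar l|)/(n:ℝ) :=
            Finset.sum_le_sum step1
        _ = (∑ t ∈ Finset.range n, ∑ l ∈ T,
              |pairProd (PFseq t) l - bTraj R Z PBstar l|)/(n:ℝ) := by
            rw [← Finset.sum_div, Finset.sum_comm]
        _ ≤ (∑ t ∈ Finset.range n, (b t + c t))/(n:ℝ) := by
            apply (div_le_div_iff_of_pos_right hnR).mpr
            apply Finset.sum_le_sum
            intro t _
            calc ∑ l ∈ T, |pairProd (PFseq t) l - bTraj R Z PBstar l|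
                ≤ ∑ l ∈ T, (|pairProd (PFseq t) l - bTraj R Z (PBseq t) l|
                    + |bTraj R Z (PBseq t) l - bTraj R Z PBstar l|) :=
                  Finset.sum_le_sum fun l _ => abs_sub_le _ _ _
              _ = b t + c t := Finset.sum_add_distrib
        _ = (∑ t ∈ Finset.range n, b t)/(n:ℝ) + (∑ t ∈ Finset.range n, c t)/(n:ℝ) := by
            rw [Finset.sum_add_distrib, add_div]
    have hGnn : ∀ n:ℕ, 0 ≤ ∑ l ∈ T,
        |(∑ t ∈ Finset.range n, pairProd (PFseq t) l) / (n:ℝ) - pairProd PFstar l| :=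
      fun n => Finset.sum_nonneg fun l _ => abs_nonneg _
    exact squeeze_zero' (Filter.Eventually.of_forall hGnn) hGle
      (by simpa using hA0.add hC0)
end
end

section
/- The backward policy P_B(s|s') = n(s)/n(s') maximizes, over all backward policies, the entropy of the induced distribution over trajectories ending at any fixed terminal state x: under this policy, every directed path from s0 to x has equal probability 1/n(x), which is the maximum-entropy (uniform) distribution over such paths. -/
open scoped BigOperators Classical

noncomputable section

lemma pairProd_nonneg {S : Type*} {f : S → S → ℝ} (hf : ∀ a b, 0 ≤ f a b) :
    ∀ l : List S, 0 ≤ pairProd f l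
  | [] => zero_le_one
  | [_] => zero_le_one
  | a :: b :: l => mul_nonneg (hf a b) (pairProd_nonneg hf (b :: l))

lemma pairProd_concat {S : Type*} (f : S → S → ℝ) (y : S) :
    ∀ (m : List S) (s : S), m.getLast? = some s →
      pairProd f (m ++ [y]) = pairProd f m * f s y
  | [], s, h => by simp at h
  | [a], s, h => by
      simp only [List.getLast?_singleton, Option.some.injEq] at h
      subst h
      simp [pairProd]
  | a :: b :: l, s, h => by
      have h' : (b :: l).getLast? = some s := by
        rw [← h]; simp [List.getLast?_cons_cons]
      have := pairProd_concat f y (b :: l) s h'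
      simp only [List.cons_append, pairProd] at *
      rw [this]; ring

lemma chain'_last_pred {S : Type*} {E : S → S → Prop} {y : S} :
    ∀ l : List S, l.Chain' E → l.getLast? = some y → 2 ≤ l.length → ∃ s, E s y
  | [], _, h, _ => by simp at h
  | [a], _, _, hl => by simp at hl
  | a :: b :: l, hc, h, _ => by
      match l, hc, h with
      | [], hc, h =>
          simp only [List.getLast?_cons_cons, List.getLast?_singleton,
            Option.some.injEq] at h
          exact ⟨a, h ▸ (List.isChain_cons_cons.mp hc).1⟩
      | c :: l, hc, h =>
          exact chain'_last_pred (b :: c :: l) (List.isChain_cons_cons.mp hc).2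
            (by rw [← h]; simp [List.getLast?_cons_cons]) (by simp)

def pathsTo {S : Type*} [Fintype S] (E : S → S → Prop) (s0 : S)
    (rank : S → ℕ) (hrank : ∀ s s', E s s' → rank s < rank s') (y : S) :
    Finset (List S) :=
  if y = s0 then {[s0]}
  else (Finset.univ.filter (fun s => E s y)).attach.biUnion
    (fun s => (pathsTo E s0 rank hrank s.1).image (· ++ [y]))
termination_by rank y
decreasing_by
  exact hrank _ _ (by simpa using (Finset.mem_filter.mp s.2).2)

lemma mem_pathsTo {S : Type*} [Fintype S] {E : S → S → Prop} {s0 : S}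
    (hinit : ∀ s, ¬ E s s0)
    {rank : S → ℕ} (hrank : ∀ s s', E s s' → rank s < rank s') (y : S)
    (l : List S) :
    l ∈ pathsTo E s0 rank hrank y ↔
      (l.head? = some s0 ∧ l.Chain' E ∧ l.getLast? = some y) := by
  induction y using (measure rank).wf.induction generalizing l with
  | _ y IH =>
  rw [pathsTo]
  split_ifs with hy
  · subst hy
    simp only [Finset.mem_singleton]
    constructor
    · rintro rfl; simp; exact List.isChain_singleton y
    · rintro ⟨h1, h2, h3⟩
      match l, h1, h3 with
      | [a], h1, h3 =>
          simp only [List.head?_cons, Option.some.injEq] at h1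
          subst h1; rfl
      | a :: b :: m, h1, h3 =>
          obtain ⟨s, hs⟩ := chain'_last_pred (a :: b :: m) h2 h3 (by simp)
          exact absurd hs (hinit s)
  · simp only [Finset.mem_biUnion, Finset.mem_attach, Finset.mem_image, true_and,
      Subtype.exists, Finset.mem_filter, Finset.mem_univ, true_and]
    constructor
    · rintro ⟨s, hs, m, hm, rfl⟩
      rw [IH s (hrank s y hs)] at hm
      obtain ⟨h1, h2, h3⟩ := hm
      have hmne : m ≠ [] := by rintro rfl; simp at h3
      refine ⟨?_, ?_, ?_⟩
      · rwa [List.head?_append_of_ne_nil _ hmne]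
      · change List.IsChain E (m ++ [y]); rw [List.isChain_append]
        exact ⟨h2, List.isChain_singleton y, fun a ha b hb => by
          rw [h3] at ha; rw [List.head?_cons] at hb
          cases ha; cases hb; exact hs⟩
      · simp
    · rintro ⟨h1, h2, h3⟩
      have hlne : l ≠ [] := by rintro rfl; simp at h1
      -- l has length ≥ 2
      have hlen : 2 ≤ l.length := by
        match l, h1, h3 with
        | [a], h1, h3 =>
            simp only [List.head?_cons, Option.some.injEq] at h1
            simp only [List.getLast?_singleton, Option.some.injEq] at h3
            exact absurd (h3 ▸ h1.symm ▸ rfl : y = s0) hy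
        | a :: b :: m, _, _ => simp
      set m := l.dropLast with hmdef
      have hmne : m ≠ [] := by
        rw [hmdef]
        intro h
        have := l.length_dropLast
        rw [h] at this
        simp at this
        omega
      have hldec : l = m ++ [y] := by
        have h4 : l.getLast hlne = y := by
          have := List.getLast?_eq_getLast hlne
          rw [h3] at this; exact (Option.some.injEq _ _ ▸ this.symm :)
        conv_lhs => rw [← List.dropLast_append_getLast hlne, h4]
      set s := m.getLast hmne with hsdef
      have hms : m.getLast? = some s := List.getLast?_eq_getLast hmne
      have hEsy : E s y := by
        rw [hldec] at h2; change List.IsChain E (m ++ [y]) at h2; rw [List.isChain_append] at h2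
        exact h2.2.2 s hms y rfl
      refine ⟨s, hEsy, m, ?_, hldec.symm⟩
      rw [IH s (hrank s y hEsy)]
      refine ⟨?_, ?_, hms⟩
      · rw [hldec, List.head?_append_of_ne_nil _ hmne] at h1; exact h1
      · rw [hldec] at h2; change List.IsChain E (m ++ [y]) at h2; rw [List.isChain_append] at h2; exact h2.1

lemma sum_pathsTo {S : Type*} [Fintype S] {E : S → S → Prop} {s0 : S}
    (hinit : ∀ s, ¬ E s s0)
    {rank : S → ℕ} (hrank : ∀ s s', E s s' → rank s < rank s')
    {PB : S → S → ℝ} (hPB : IsBackwardPolicy E s0 PB) (y : S) :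
    ∑ l ∈ pathsTo E s0 rank hrank y, pairProd (fun a b => PB b a) l = 1 := by
  induction y using (measure rank).wf.induction with
  | _ y IH =>
  rw [pathsTo]
  split_ifs with hy
  · simp [pairProd]
  · rw [Finset.sum_biUnion]
    · have key : ∀ s ∈ (Finset.univ.filter (fun s => E s y)).attach,
          ∑ l ∈ (pathsTo E s0 rank hrank s.1).image (· ++ [y]),
            pairProd (fun a b => PB b a) l = PB y s.1 := by
        intro s _
        rw [Finset.sum_image (fun m₁ _ m₂ _ h => by
          simpa using (List.append_left_injective [y]) h)]
        have hEs : E s.1 y := by simpa using (Finset.mem_filter.mp s.2).2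
        have : ∀ m ∈ pathsTo E s0 rank hrank s.1,
            pairProd (fun a b => PB b a) (m ++ [y])
              = pairProd (fun a b => PB b a) m * PB y s.1 := by
          intro m hm
          have h3 := ((mem_pathsTo hinit hrank s.1 m).mp hm).2.2
          exact pairProd_concat _ y m s.1 h3
        rw [Finset.sum_congr rfl this, ← Finset.sum_mul,
          IH s.1 (hrank _ _ hEs), one_mul]
      rw [Finset.sum_congr rfl key]
      rw [Finset.sum_attach (Finset.univ.filter (fun s => E s y)) (fun s => PB y s)]
      rw [Finset.sum_filter_of_ne (fun s _ h => by
        by_contra hE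
        exact h (by simpa using fun h' => hE (hPB.2.1 y s h')))]
      · exact hPB.2.2 y hy
    · intro s _ t _ hst
      simp only [Function.onFun, Finset.disjoint_left, Finset.mem_image]
      rintro l ⟨m, hm, rfl⟩ ⟨m', hm', he⟩
      have h1 := ((mem_pathsTo hinit hrank s.1 m).mp hm).2.2
      have h2 := ((mem_pathsTo hinit hrank t.1 m').mp hm').2.2
      have : m = m' := by simpa using (List.append_left_injective [y]) he.symm
      subst this
      rw [h1] at h2
      exact hst (Subtype.ext (by injection h2))

lemma pairProd_congr {S : Type*} {E : S → S → Prop} {f g : S → S → ℝ}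
    (h : ∀ a b, E a b → f a b = g a b) :
    ∀ l : List S, l.Chain' E → pairProd f l = pairProd g l
  | [], _ => rfl
  | [_], _ => rfl
  | a :: b :: l, hc => by
      rw [pairProd, pairProd, h a b (List.isChain_cons_cons.mp hc).1,
        pairProd_congr h (b :: l) (List.isChain_cons_cons.mp hc).2]

lemma pairProd_ratio {S : Type*} (n : S → ℕ) (hn : ∀ s, 0 < n s) :
    ∀ (l : List S) (a y : S), l.head? = some a → l.getLast? = some y →
      pairProd (fun a b => (n a : ℝ) / (n b : ℝ)) l = (n a : ℝ) / (n y : ℝ)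
  | [], a, y, h1, _ => by simp at h1
  | [c], a, y, h1, h2 => by
      simp only [List.head?_cons, List.getLast?_singleton, Option.some.injEq] at h1 h2
      subst h1; subst h2
      exact (div_self (by exact_mod_cast (hn _).ne')).symm
  | a' :: b :: l, a, y, h1, h2 => by
      simp only [List.head?_cons, Option.some.injEq] at h1
      subst h1
      have h2' : (b :: l).getLast? = some y := by
        rw [← h2]; simp [List.getLast?_cons_cons]
      rw [pairProd, pairProd_ratio n hn (b :: l) b y rfl h2']
      have hb : (n b : ℝ) ≠ 0 := by exact_mod_cast (hn b).ne'
      have hy : (n y : ℝ) ≠ 0 := by exact_mod_cast (hn y).ne'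
      field_simp

lemma n_pos {S : Type*} [Fintype S] {E : S → S → Prop} {s0 : S}
    (hinit : ∀ s, ¬ E s s0)
    (hreach : ∀ s, Relation.ReflTransGen E s0 s)
    {n : S → ℕ} (hn0 : n s0 = 1)
    (hnrec : ∀ s', s' ≠ s0 → n s' = ∑ s ∈ Finset.univ.filter (fun s => E s s'), n s)
    (s : S) : 0 < n s := by
  induction hreach s with
  | refl => omega
  | tail hab e ih =>
    rename_i b c
    have hc : c ≠ s0 := fun h => hinit b (h ▸ e)
    rw [hnrec c hc]
    have hb : n b ≤ ∑ s ∈ Finset.univ.filter (fun s => E s c), n s :=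
      Finset.single_le_sum (fun i _ => Nat.zero_le _)
        (Finset.mem_filter.mpr ⟨Finset.mem_univ b, e⟩)
    omega

lemma entropy_le_log {ι : Type*} (T : Finset ι) (p : ι → ℝ)
    (hp : ∀ i ∈ T, 0 ≤ p i) (hsum : ∑ i ∈ T, p i = 1)
    (N : ℝ) (hN : 0 < N) (hcard : (T.card : ℝ) = N) :
    - ∑ i ∈ T, p i * Real.log (p i) ≤ Real.log N := by
  have key : ∀ i ∈ T, -(p i * Real.log (p i)) ≤ 1/N - p i + p i * Real.log N := by
    intro i hi
    rcases eq_or_lt_of_le (hp i hi) with h | h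
    · rw [← h]; simp; positivity
    · have h1 : 0 < 1/(N * p i) := by positivity
      have hlog := Real.log_le_sub_one_of_pos h1
      have heq : Real.log (1/(N * p i)) = -(Real.log N + Real.log (p i)) := by
        rw [one_div, Real.log_inv, Real.log_mul hN.ne' h.ne']
      rw [heq] at hlog
      have h2 : p i * -(Real.log N + Real.log (p i)) ≤ p i * (1/(N * p i) - 1) :=
        mul_le_mul_of_nonneg_left hlog h.le
      have h3 : p i * (1/(N * p i)) = 1/N := by field_simp
      nlinarith [h2, h3]
  calc - ∑ i ∈ T, p i * Real.log (p i) = ∑ i ∈ T, -(p i * Real.log (p i)) := by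
        rw [Finset.sum_neg_distrib]
    _ ≤ ∑ i ∈ T, (1/N - p i + p i * Real.log N) := Finset.sum_le_sum key
    _ = (T.card : ℝ) * (1/N) - 1 + Real.log N := by
        rw [Finset.sum_add_distrib, Finset.sum_sub_distrib, ← Finset.sum_mul, hsum,
          Finset.sum_const, nsmul_eq_mul]
        ring
    _ = Real.log N := by rw [hcard]; field_simp; ring

/-- The backward policy `P_B(s|s') = n(s)/n(s')` induces the uniform distribution
over the paths from `s0` to any fixed terminal state `x`: every such path gets
probability `1/n(x)`, and this is the maximum-entropy distribution, i.e. the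
entropy of the trajectory distribution induced by any backward policy is at
most `log n(x)`, the entropy achieved by this one. -/
theorem maxent_backward_uniform_paths
    {S : Type*} [Fintype S] [DecidableEq S]
    (E : S → S → Prop) (s0 : S)
    (hinit : ∀ s, ¬ E s s0)
    (hreach : ∀ s, Relation.ReflTransGen E s0 s)
    (rank : S → ℕ) (hrank : ∀ s s', E s s' → rank s < rank s')
    (n : S → ℕ) (hn0 : n s0 = 1)
    (hnrec : ∀ s', s' ≠ s0 → n s' = ∑ s ∈ Finset.univ.filter (fun s => E s s'), n s)
    (x : S) (hx : ∀ s', ¬ E x s')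
    (Tx : Finset (List S))
    (hTx : ∀ l, l ∈ Tx ↔ (l.head? = some s0 ∧ l.Chain' E ∧ l.getLast? = some x)) :
    -- under P_B(s|s') = n(s)/n(s'), every path from s0 to x has probability 1/n(x)
    (∀ l ∈ Tx, pairProd (fun a b => (n a : ℝ) / (n b : ℝ)) l = 1 / (n x : ℝ)) ∧
    -- and this (uniform) distribution maximizes the entropy over trajectories
    -- ending at x: any backward policy achieves entropy at most log n(x)
    (∀ PB : S → S → ℝ, IsBackwardPolicy E s0 PB →
      - ∑ l ∈ Tx, pairProd (fun a b => PB b a) l *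
          Real.log (pairProd (fun a b => PB b a) l) ≤ Real.log (n x)) := by
  have hnpos : ∀ s, 0 < n s := n_pos hinit hreach hn0 hnrec
  have part1 : ∀ l ∈ Tx, pairProd (fun a b => (n a : ℝ) / (n b : ℝ)) l
      = 1 / (n x : ℝ) := by
    intro l hl
    obtain ⟨h1, h2, h3⟩ := (hTx l).mp hl
    rw [pairProd_ratio n hnpos l s0 x h1 h3, hn0, Nat.cast_one]
  refine ⟨part1, ?_⟩
  have hTxeq : Tx = pathsTo E s0 rank hrank x := by
    ext l; rw [hTx, mem_pathsTo hinit hrank]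
  set PBs : S → S → ℝ := fun s' s => if E s s' then (n s : ℝ) / (n s' : ℝ) else 0
    with hPBs
  have hPBspol : IsBackwardPolicy E s0 PBs := by
    refine ⟨?_, ?_, ?_⟩
    · intro s' s; dsimp [PBs]; split_ifs
      · positivity
      · exact le_refl 0
    · intro s' s h; dsimp [PBs] at h; by_contra hE; simp [hE] at h
    · intro s' hs'
      have hcast : (∑ s ∈ Finset.univ.filter (fun s => E s s'), (n s : ℝ))
          = (n s' : ℝ) := by
        rw [← Nat.cast_sum, ← hnrec s' hs']
      have hne : (n s' : ℝ) ≠ 0 := by exact_mod_cast (hnpos s').ne'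
      calc ∑ s : S, PBs s' s
          = ∑ s ∈ Finset.univ.filter (fun s => E s s'), (n s : ℝ) / (n s' : ℝ) :=
            (Finset.sum_filter _ _).symm
        _ = (∑ s ∈ Finset.univ.filter (fun s => E s s'), (n s : ℝ)) / (n s' : ℝ) :=
            (Finset.sum_div _ _ _).symm
        _ = 1 := by rw [hcast, div_self hne]
  have hsum1 := sum_pathsTo hinit hrank hPBspol x
  rw [← hTxeq] at hsum1
  have hunif : ∀ l ∈ Tx, pairProd (fun a b => PBs b a) l = 1 / (n x : ℝ) := by
    intro l hl
    obtain ⟨h1, h2, h3⟩ := (hTx l).mp hl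
    rw [pairProd_congr (E := E) (f := fun a b => PBs b a)
      (g := fun a b => (n a : ℝ) / (n b : ℝ))
      (fun a b hab => by simp [PBs, hab]) l h2]
    exact part1 l hl
  rw [Finset.sum_congr rfl hunif, Finset.sum_const, nsmul_eq_mul] at hsum1
  have hx0 : (0 : ℝ) < (n x : ℝ) := by exact_mod_cast hnpos x
  have hcard : (Tx.card : ℝ) = (n x : ℝ) := by
    field_simp at hsum1; exact_mod_cast hsum1
  intro PB hPB
  have hnn : ∀ l ∈ Tx, 0 ≤ pairProd (fun a b => PB b a) l :=
    fun l _ => pairProd_nonneg (fun a b => hPB.1 b a) l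
  have hsum : ∑ l ∈ Tx, pairProd (fun a b => PB b a) l = 1 := by
    rw [hTxeq]; exact sum_pathsTo hinit hrank hPB x
  exact entropy_le_log Tx _ hnn hsum _ hx0 hcard
end
end
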